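/- arXiv:2601.13967 — 2 statements merged into one kernel-verified Lean document; each statement's English description precedes it below -/
import Mathlib

section
/- (Van der Corput lemma) Let ψ be real-valued and C^k on (a,b) with k ≥ 2, and suppose |ψ^{(k)}(x)| ≥ c > 0 for all x ∈ (a,b). Then for every λ ≠ 0, |∫_a^b e^{iλψ(x)} dx| ≤ (5·2^{k-1} − 2)·|cλ|^{-1/k}. -/
open intervalIntegral

section VdCAux
open Set MeasureTheory Complex intervalIntegral

lemma vdc_norm_exp (lam t : ℝ) : ‖Complex.exp (Complex.I * lam * t)‖ = 1 := by
  rw [Complex.norm_exp]; simp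


lemma vdc_sign {a b : ℝ} {g : ℝ → ℝ} (hg : ContinuousOn g (Set.Ioo a b))
    (hne : ∀ x ∈ Set.Ioo a b, g x ≠ 0) :
    (∀ x ∈ Set.Ioo a b, 0 < g x) ∨ (∀ x ∈ Set.Ioo a b, g x < 0) := by
  by_contra hcon
  push_neg at hcon
  obtain ⟨⟨x₁, hx₁, hx₁'⟩, ⟨x₂, hx₂, hx₂'⟩⟩ := hcon
  have h1 : g x₁ < 0 := lt_of_le_of_ne hx₁' (hne x₁ hx₁)
  have h2 : 0 < g x₂ := lt_of_le_of_ne (le_of_not_gt (by simpa using hx₂')) (Ne.symm (hne x₂ hx₂))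
  have hsub : Set.uIcc x₁ x₂ ⊆ Set.Ioo a b := Set.ordConnected_Ioo.uIcc_subset hx₁ hx₂
  have := intermediate_value_uIcc (hg.mono hsub)
  have h0 : (0:ℝ) ∈ Set.uIcc (g x₁) (g x₂) := by
    rw [Set.mem_uIcc]; left; exact ⟨le_of_lt h1, le_of_lt h2⟩
  obtain ⟨y, hy, hgy⟩ := this h0
  exact hne y (hsub hy) hgy

lemma vdc_triv {p q : ℝ} (lam : ℝ) (ψ : ℝ → ℝ) (hpq : p ≤ q) :
    ‖∫ x in p..q, Complex.exp (Complex.I * lam * ψ x)‖ ≤ q - p := by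
  have := intervalIntegral.norm_integral_le_of_norm_le_const
    (C := 1) (f := fun x => Complex.exp (Complex.I * lam * ψ x)) (a := p) (b := q)
    (fun x _ => le_of_eq (vdc_norm_exp lam (ψ x)))
  simpa [_root_.abs_of_nonneg (sub_nonneg.2 hpq)] using this

lemma vdc_integrable {a b lam : ℝ} {ψ : ℝ → ℝ} (hψ : ContinuousOn ψ (Set.Ioo a b))
    {p q : ℝ} (hap : a ≤ p) (hqb : q ≤ b) (hpq : p ≤ q) :
    IntervalIntegrable (fun x => Complex.exp (Complex.I * lam * ψ x)) volume p q := by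
  rw [intervalIntegrable_iff_integrableOn_Ioo_of_le hpq]
  have hsub : Set.Ioo p q ⊆ Set.Ioo a b := Set.Ioo_subset_Ioo hap hqb
  have hcont : ContinuousOn (fun x => Complex.exp (Complex.I * lam * ψ x)) (Set.Ioo p q) := by
    apply Complex.continuous_exp.comp_continuousOn
    exact continuousOn_const.mul (Complex.continuous_ofReal.comp_continuousOn (hψ.mono hsub))
  have hone : IntegrableOn (fun _ => (1:ℝ)) (Set.Ioo p q) volume :=
    integrableOn_const measure_Ioo_lt_top.ne
  exact Integrable.mono' hone (hcont.aestronglyMeasurable measurableSet_Ioo)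
    (Filter.Eventually.of_forall fun x => le_of_eq (vdc_norm_exp lam (ψ x)))

lemma vdc_conj (p q lam : ℝ) (ψ : ℝ → ℝ) :
    ‖∫ x in p..q, Complex.exp (-(Complex.I * lam * ψ x))‖ =
    ‖∫ x in p..q, Complex.exp (Complex.I * lam * ψ x)‖ := by
  have h : ∀ x : ℝ, Complex.exp (-(Complex.I * lam * ψ x)) =
      (starRingEnd ℂ) (Complex.exp (Complex.I * lam * ψ x)) := by
    intro x
    rw [← Complex.exp_conj]
    congr 1
    simp [Complex.conj_I]
  simp_rw [h]
  rw [show (∫ x in p..q, (starRingEnd ℂ) (Complex.exp (Complex.I * lam * ψ x))) =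
      (starRingEnd ℂ) (∫ x in p..q, Complex.exp (Complex.I * lam * ψ x)) by
    simp only [intervalIntegral, integral_conj, ← map_sub]]
  exact RCLike.norm_conj _

-- core IBP estimate on a compact subinterval
lemma vdc_ibp {a b : ℝ} {ψ : ℝ → ℝ} (hψ : ContDiffOn ℝ 2 ψ (Set.Ioo a b))
    {c : ℝ} (hc : 0 < c)
    (hlow : ∀ x ∈ Set.Ioo a b, c ≤ |deriv ψ x|)
    (hmono : ∀ x ∈ Set.Ioo a b, 0 ≤ deriv (deriv ψ) x)
    {lam : ℝ} (hlam : 0 < lam)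
    {u v : ℝ} (hau : a < u) (huv : u ≤ v) (hvb : v < b) :
    ‖∫ x in u..v, Complex.exp (Complex.I * lam * ψ x)‖ ≤ 3 / (c * lam) := by
  set φ : ℝ → ℝ := deriv ψ with hφdef
  set φ₂ : ℝ → ℝ := deriv φ with hφ₂def
  have hopen : IsOpen (Set.Ioo a b) := isOpen_Ioo
  have huv_sub : Set.uIcc u v ⊆ Set.Ioo a b := by
    rw [Set.uIcc_of_le huv]
    exact fun x hx => ⟨lt_of_lt_of_le hau hx.1, lt_of_le_of_lt hx.2 hvb⟩
  have humem : u ∈ Set.Ioo a b := huv_sub (Set.left_mem_uIcc)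
  have hvmem : v ∈ Set.Ioo a b := huv_sub (Set.right_mem_uIcc)
  -- derivatives
  have hψd : ∀ x ∈ Set.Ioo a b, HasDerivAt ψ (φ x) x := by
    intro x hx
    exact ((hψ.differentiableOn (by norm_num)).differentiableAt
      (hopen.mem_nhds hx)).hasDerivAt
  have hφC1 : ContDiffOn ℝ 1 φ (Set.Ioo a b) := by
    exact hψ.deriv_of_isOpen hopen (m := 1) (by norm_num)
  have hφd : ∀ x ∈ Set.Ioo a b, HasDerivAt φ (φ₂ x) x := by
    intro x hx
    exact ((hφC1.differentiableOn (by norm_num)).differentiableAt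
      (hopen.mem_nhds hx)).hasDerivAt
  have hφcont : ContinuousOn φ (Set.Ioo a b) := hφC1.continuousOn
  have hφ₂cont : ContinuousOn φ₂ (Set.Ioo a b) :=
    (hφC1.deriv_of_isOpen hopen (m := 0) (by norm_num)).continuousOn
  have hφne : ∀ x ∈ Set.Ioo a b, φ x ≠ 0 := by
    intro x hx h
    have := hlow x hx
    rw [h] at this
    simp at this
    linarith
  set G : ℝ → ℂ := fun x => Complex.exp (Complex.I * lam * ψ x) with hG
  set F : ℝ → ℂ := fun x => 1 / (Complex.I * lam * φ x) with hF
  have hden : ∀ x ∈ Set.Ioo a b, (Complex.I * lam * φ x : ℂ) ≠ 0 := by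
    intro x hx
    exact mul_ne_zero (mul_ne_zero Complex.I_ne_zero
      (by exact_mod_cast ne_of_gt hlam)) (by exact_mod_cast hφne x hx)
  have hFd : ∀ x ∈ Set.uIcc u v, HasDerivAt F
      (-(Complex.I * lam * φ₂ x) / (Complex.I * lam * φ x)^2) x := by
    intro x hx
    have h1 : HasDerivAt (fun y => (Complex.I * lam * φ y : ℂ))
        (Complex.I * lam * φ₂ x) x := by
      have h2 := ((hφd x (huv_sub hx)).ofReal_comp).const_mul (Complex.I * (lam:ℂ))
      simpa [mul_assoc] using h2
    have h3 := (hasDerivAt_const x (1:ℂ)).div h1 (hden x (huv_sub hx))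
    exact h3.congr_deriv (by ring)
  have hGd : ∀ x ∈ Set.uIcc u v, HasDerivAt G
      (Complex.exp (Complex.I * lam * ψ x) * (Complex.I * lam * φ x)) x := by
    intro x hx
    have h1 : HasDerivAt (fun y => (Complex.I * lam * ψ y : ℂ))
        (Complex.I * lam * φ x) x := by
      have h2 := ((hψd x (huv_sub hx)).ofReal_comp).const_mul (Complex.I * (lam:ℂ))
      simpa [mul_assoc] using h2
    exact h1.cexp
  have hcont_inner : ContinuousOn (fun x => (Complex.I * lam * φ x : ℂ)) (Set.Ioo a b) :=
    continuousOn_const.mul (Complex.continuous_ofReal.comp_continuousOn hφcont)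
  have hcont_inner2 : ContinuousOn (fun x => (Complex.I * lam * φ₂ x : ℂ)) (Set.Ioo a b) :=
    continuousOn_const.mul (Complex.continuous_ofReal.comp_continuousOn hφ₂cont)
  have hF'int : IntervalIntegrable
      (fun x => -(Complex.I * lam * φ₂ x) / (Complex.I * lam * φ x)^2) volume u v := by
    apply ContinuousOn.intervalIntegrable
    apply ContinuousOn.div ((hcont_inner2.mono huv_sub).neg) ((hcont_inner.mono huv_sub).pow 2)
    intro x hx
    exact pow_ne_zero 2 (hden x (huv_sub hx))
  have hGcont : ContinuousOn G (Set.Ioo a b) := by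
    apply Complex.continuous_exp.comp_continuousOn
    exact continuousOn_const.mul (Complex.continuous_ofReal.comp_continuousOn hψ.continuousOn)
  have hG'int : IntervalIntegrable
      (fun x => Complex.exp (Complex.I * lam * ψ x) * (Complex.I * lam * φ x)) volume u v := by
    apply ContinuousOn.intervalIntegrable
    exact (hGcont.mono huv_sub).mul (hcont_inner.mono huv_sub)
  have hibp := intervalIntegral.integral_mul_deriv_eq_deriv_mul hFd hGd hF'int hG'int
  have hpt : ∀ x ∈ Set.uIcc u v, Complex.exp (Complex.I * lam * ψ x) =
      F x * (Complex.exp (Complex.I * lam * ψ x) * (Complex.I * lam * φ x)) := by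
    intro x hx
    rw [hF]
    field_simp [hden x (huv_sub hx)]
    have hl1 : (lam:ℂ) ≠ 0 := by exact_mod_cast ne_of_gt hlam
    have hl2 : (φ x : ℂ) ≠ 0 := by exact_mod_cast hφne x (huv_sub hx)
    rw [div_self (mul_ne_zero hl1 hl2)]
  have heq : (∫ x in u..v, Complex.exp (Complex.I * lam * ψ x)) =
      F v * G v - F u * G u -
        ∫ x in u..v, (-(Complex.I * lam * φ₂ x) / (Complex.I * lam * φ x)^2) * G x := by
    rw [intervalIntegral.integral_congr hpt]
    exact hibp
  -- boundary term bounds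
  have hnorm_inner : ∀ x ∈ Set.Ioo a b, ‖(Complex.I * lam * φ x : ℂ)‖ = lam * |φ x| := by
    intro x hx
    simp [abs_of_pos hlam]
  have hFbound : ∀ x ∈ Set.Ioo a b, ‖F x‖ ≤ 1 / (c * lam) := by
    intro x hx
    rw [hF]
    simp only [one_div, norm_inv]
    rw [hnorm_inner x hx]
    rw [← one_div, ← one_div]
    apply one_div_le_one_div_of_le (by positivity)
    calc c * lam = lam * c := by ring
    _ ≤ lam * |φ x| := by
      apply mul_le_mul_of_nonneg_left (hlow x hx) (le_of_lt hlam)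
  have hGnorm : ∀ x : ℝ, ‖G x‖ = 1 := by
    intro x
    rw [hG]
    rw [Complex.norm_exp]
    simp
  -- the middle integral
  set H : ℝ → ℝ := fun x => -(φ x)⁻¹ / lam with hH
  set H' : ℝ → ℝ := fun x => -(-(φ₂ x) / (φ x)^2) / lam with hH'
  have hHd : ∀ x ∈ Set.uIcc u v, HasDerivAt H (H' x) x := by
    intro x hx
    exact (((hφd x (huv_sub hx)).inv (hφne x (huv_sub hx))).neg).div_const lam
  have hH'cont : ContinuousOn H' (Set.Ioo a b) := by
    apply ContinuousOn.div_const
    apply ContinuousOn.neg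
    apply ContinuousOn.div hφ₂cont.neg (hφcont.pow 2)
    intro x hx
    exact pow_ne_zero 2 (hφne x hx)
  have hH'int : IntervalIntegrable H' volume u v :=
    (hH'cont.mono huv_sub).intervalIntegrable
  have hHint : (∫ x in u..v, H' x) = H v - H u :=
    intervalIntegral.integral_eq_sub_of_hasDerivAt hHd hH'int
  have hnorm_eq : ∀ x ∈ Set.uIcc u v,
      ‖(-(Complex.I * lam * φ₂ x) / (Complex.I * lam * φ x)^2) * G x‖ = H' x := by
    intro x hx
    have hmem := huv_sub hx
    rw [norm_mul, hGnorm, mul_one, norm_div, norm_neg, norm_pow]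
    have h2 : ‖(Complex.I * lam * φ₂ x : ℂ)‖ = lam * |φ₂ x| := by
      simp [abs_of_pos hlam]
    rw [h2, hnorm_inner x hmem, hH']
    rw [_root_.abs_of_nonneg (hmono x hmem)]
    have hsq : |φ x| ^ 2 = φ x ^ 2 := sq_abs _
    rw [mul_pow, hsq]
    have hφx := hφne x hmem
    have hlam' : lam ≠ 0 := ne_of_gt hlam
    field_simp
  -- sign analysis for H v - H u
  have hsgn := vdc_sign hφcont hφne
  have hHdiff : H v - H u ≤ 1 / (c * lam) := by
    rw [hH]
    simp only
    rcases hsgn with hpos | hneg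
    · have h1 : c ≤ φ u := by
        have h0 := hlow u humem
        rwa [_root_.abs_of_pos (hpos u humem)] at h0
      have h3 : (φ u)⁻¹ ≤ c⁻¹ := inv_anti₀ hc h1
      have h4 : 0 < (φ v)⁻¹ := inv_pos.2 (hpos v hvmem)
      calc -(φ v)⁻¹ / lam - -(φ u)⁻¹ / lam = ((φ u)⁻¹ - (φ v)⁻¹) / lam := by ring
        _ ≤ c⁻¹ / lam := by gcongr; linarith
        _ = 1 / (c * lam) := by rw [inv_eq_one_div, div_div]
    · have h1 : c ≤ -φ v := by
        have h0 := hlow v hvmem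
        rwa [abs_of_neg (hneg v hvmem)] at h0
      have h3 : (-φ v)⁻¹ ≤ c⁻¹ := inv_anti₀ hc h1
      rw [inv_neg] at h3
      have h4 : (φ u)⁻¹ < 0 := inv_lt_zero.2 (hneg u humem)
      calc -(φ v)⁻¹ / lam - -(φ u)⁻¹ / lam = (-(φ v)⁻¹ + (φ u)⁻¹) / lam := by ring
        _ ≤ c⁻¹ / lam := by gcongr; linarith
        _ = 1 / (c * lam) := by rw [inv_eq_one_div, div_div]
  have hmid : ‖∫ x in u..v,
      (-(Complex.I * lam * φ₂ x) / (Complex.I * lam * φ x)^2) * G x‖ ≤ 1 / (c * lam) := by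
    calc ‖∫ x in u..v, (-(Complex.I * lam * φ₂ x) / (Complex.I * lam * φ x)^2) * G x‖
        ≤ ∫ x in u..v, ‖(-(Complex.I * lam * φ₂ x) / (Complex.I * lam * φ x)^2) * G x‖ :=
          intervalIntegral.norm_integral_le_integral_norm huv
      _ = ∫ x in u..v, H' x := intervalIntegral.integral_congr hnorm_eq
      _ = H v - H u := hHint
      _ ≤ 1 / (c * lam) := hHdiff
  have hbv : ‖F v * G v‖ ≤ 1 / (c * lam) := by
    rw [norm_mul, hGnorm, mul_one]; exact hFbound v hvmem
  have hbu : ‖F u * G u‖ ≤ 1 / (c * lam) := by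
    rw [norm_mul, hGnorm, mul_one]; exact hFbound u humem
  show ‖∫ x in u..v, Complex.exp (Complex.I * lam * ψ x)‖ ≤ 3 / (c * lam)
  calc ‖∫ x in u..v, Complex.exp (Complex.I * lam * ψ x)‖
      = ‖F v * G v - F u * G u -
        ∫ x in u..v, (-(Complex.I * lam * φ₂ x) / (Complex.I * lam * φ x)^2) * G x‖ := by
        rw [heq]
    _ ≤ ‖F v * G v - F u * G u‖ +
        ‖∫ x in u..v, (-(Complex.I * lam * φ₂ x) / (Complex.I * lam * φ x)^2) * G x‖ :=
        norm_sub_le _ _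
    _ ≤ (‖F v * G v‖ + ‖F u * G u‖) +
        ‖∫ x in u..v, (-(Complex.I * lam * φ₂ x) / (Complex.I * lam * φ x)^2) * G x‖ := by
        gcongr
        exact norm_sub_le _ _
    _ ≤ (1 / (c * lam) + 1 / (c * lam)) + 1 / (c * lam) := by
        gcongr
    _ = 3 / (c * lam) := by ring

lemma vdc_iteratedDerivWithin_of_isOpen {s : Set ℝ} (hs : IsOpen s) {x : ℝ} (hx : x ∈ s)
    (n : ℕ) (f : ℝ → ℝ) : iteratedDerivWithin n f s x = iteratedDeriv n f x := by
  simp only [iteratedDerivWithin, iteratedDeriv]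
  rw [iteratedFDerivWithin_of_isOpen n hs hx]

lemma vdc_base (a b : ℝ) (hab : a < b) (ψ : ℝ → ℝ) (hψ : ContDiffOn ℝ 2 ψ (Set.Ioo a b))
    (hmono : ∀ x ∈ Set.Ioo a b, 0 ≤ iteratedDerivWithin 2 ψ (Set.Ioo a b) x)
    (c : ℝ) (hc : 0 < c)
    (hlow : ∀ x ∈ Set.Ioo a b, c ≤ |iteratedDerivWithin 1 ψ (Set.Ioo a b) x|)
    (lam : ℝ) (hlam : 0 < lam) :
    ‖∫ x in a..b, Complex.exp (Complex.I * lam * ψ x)‖ ≤ 3 / (c * lam) := by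
  have hlow' : ∀ x ∈ Set.Ioo a b, c ≤ |deriv ψ x| := by
    intro x hx
    have := hlow x hx
    rwa [vdc_iteratedDerivWithin_of_isOpen isOpen_Ioo hx, iteratedDeriv_one] at this
  have hmono' : ∀ x ∈ Set.Ioo a b, 0 ≤ deriv (deriv ψ) x := by
    intro x hx
    have := hmono x hx
    rwa [vdc_iteratedDerivWithin_of_isOpen isOpen_Ioo hx,
      show iteratedDeriv 2 ψ = deriv (deriv ψ) by
        rw [show (2:ℕ) = 1 + 1 from rfl, iteratedDeriv_succ, iteratedDeriv_one]] at this
  apply le_of_forall_pos_le_add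
  intro ε hε
  set ε' : ℝ := min (ε/2) ((b-a)/4) with hε'
  have hε'pos : 0 < ε' := lt_min (by linarith) (by linarith)
  set u : ℝ := a + ε' with hu
  set v : ℝ := b - ε' with hv
  have hau : a < u := by simp [hu]; linarith
  have huv : u ≤ v := by
    have : ε' ≤ (b-a)/4 := min_le_right _ _
    simp [hu, hv]; linarith
  have hvb : v < b := by simp [hv]; linarith
  have hua : a ≤ u := le_of_lt hau
  have hvb' : v ≤ b := le_of_lt hvb
  have huv' : a ≤ v := le_trans hua huv
  have hub : u ≤ b := le_trans huv hvb'
  have i1 := vdc_integrable (lam := lam) hψ.continuousOn (le_refl a) hub hua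
  have i2 := vdc_integrable (lam := lam) hψ.continuousOn hua hvb' huv
  have i3 := vdc_integrable (lam := lam) hψ.continuousOn huv' (le_refl b) hvb'
  have e1 := intervalIntegral.integral_add_adjacent_intervals i1 i2
  have i12 := vdc_integrable (lam := lam) hψ.continuousOn (le_refl a) hvb' huv'
  have e2 := intervalIntegral.integral_add_adjacent_intervals i12 i3
  have hsum : (∫ x in a..b, Complex.exp (Complex.I * lam * ψ x)) =
      (∫ x in a..u, Complex.exp (Complex.I * lam * ψ x)) +
      (∫ x in u..v, Complex.exp (Complex.I * lam * ψ x)) +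
      (∫ x in v..b, Complex.exp (Complex.I * lam * ψ x)) := by
    rw [e1, e2]
  have t1 := vdc_triv (p := a) (q := u) lam ψ hua
  have t3 := vdc_triv (p := v) (q := b) lam ψ hvb'
  have tm := vdc_ibp hψ hc hlow' hmono' hlam hau huv hvb
  have hε1 : u - a = ε' := by simp [hu]
  have hε2 : b - v = ε' := by simp [hv]
  calc ‖∫ x in a..b, Complex.exp (Complex.I * lam * ψ x)‖
      ≤ ‖∫ x in a..u, Complex.exp (Complex.I * lam * ψ x)‖ +
        ‖∫ x in u..v, Complex.exp (Complex.I * lam * ψ x)‖ +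
        ‖∫ x in v..b, Complex.exp (Complex.I * lam * ψ x)‖ := by
        rw [hsum]
        exact le_trans (norm_add_le _ _) (by gcongr; exact norm_add_le _ _)
    _ ≤ ε' + 3 / (c * lam) + ε' := by
        exact add_le_add (add_le_add (le_of_le_of_eq t1 hε1) tm) (le_of_le_of_eq t3 hε2)
    _ ≤ 3 / (c * lam) + ε := by
        have : ε' ≤ ε/2 := min_le_left _ _
        linarith

lemma vdc_rpow_key {c lam : ℝ} (hc : 0 < c) (hlam : 0 < lam) (k : ℕ) (hk : 1 ≤ k) :
    (c * ((c*lam) ^ (-(1:ℝ)/((k:ℝ)+1))) * lam) ^ (-(1:ℝ)/(k:ℝ))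
      = (c*lam) ^ (-(1:ℝ)/((k:ℝ)+1)) := by
  have hcl : 0 < c * lam := mul_pos hc hlam
  have h1 : c * ((c*lam) ^ (-(1:ℝ)/((k:ℝ)+1))) * lam
      = (c*lam) ^ (1 + -(1:ℝ)/((k:ℝ)+1)) := by
    rw [Real.rpow_add hcl, Real.rpow_one]; ring
  rw [h1, ← Real.rpow_mul (le_of_lt hcl)]
  congr 1
  have hk0 : (k:ℝ) ≠ 0 := Nat.cast_ne_zero.2 (by omega)
  have hk1 : (k:ℝ)+1 ≠ 0 := by positivity
  field_simp
  ring

def VDCStatement (k : ℕ) : Prop :=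
  ∀ a b : ℝ, a < b → ∀ ψ : ℝ → ℝ, ContDiffOn ℝ (k+1) ψ (Set.Ioo a b) →
    (∀ x ∈ Set.Ioo a b, 0 ≤ iteratedDerivWithin (k+1) ψ (Set.Ioo a b) x) →
    ∀ c : ℝ, 0 < c → (∀ x ∈ Set.Ioo a b, c ≤ |iteratedDerivWithin k ψ (Set.Ioo a b) x|) →
    ∀ lam : ℝ, 0 < lam →
    ‖∫ x in a..b, Complex.exp (Complex.I * lam * ψ x)‖ ≤
      (5 * 2 ^ (k - 1) - 2 : ℝ) * (c * lam) ^ (-(1:ℝ)/(k:ℝ))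

lemma vdc_one : VDCStatement 1 := by
  intro a b hab ψ hψ hmono c hc hlow lam hlam
  have := vdc_base a b hab ψ (by exact_mod_cast hψ) hmono c hc hlow lam hlam
  calc ‖∫ x in a..b, Complex.exp (Complex.I * lam * ψ x)‖ ≤ 3 / (c * lam) := this
    _ = (5 * 2 ^ (1 - 1) - 2 : ℝ) * (c * lam) ^ (-(1:ℝ)/((1:ℕ):ℝ)) := by
        rw [show (-(1:ℝ)/((1:ℕ):ℝ)) = -1 by norm_num, Real.rpow_neg_one]
        norm_num
        rw [div_eq_mul_inv, mul_inv, mul_comm c⁻¹]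

lemma vdc_step_pos (k : ℕ) (hk : 1 ≤ k) (ih : VDCStatement k)
    (a b : ℝ) (hab : a < b) (ψ : ℝ → ℝ) (hψ : ContDiffOn ℝ (k+1) ψ (Set.Ioo a b))
    (c : ℝ) (hc : 0 < c)
    (hD : ∀ x ∈ Set.Ioo a b, c ≤ iteratedDerivWithin (k+1) ψ (Set.Ioo a b) x)
    (lam : ℝ) (hlam : 0 < lam) :
    ‖∫ x in a..b, Complex.exp (Complex.I * lam * ψ x)‖ ≤
      (5 * 2 ^ k - 2 : ℝ) * (c * lam) ^ (-(1:ℝ)/((k:ℝ)+1)) := by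
  have hopen : IsOpen (Set.Ioo a b) := isOpen_Ioo
  have hud : UniqueDiffOn ℝ (Set.Ioo a b) := hopen.uniqueDiffOn
  set g : ℝ → ℝ := iteratedDerivWithin k ψ (Set.Ioo a b) with hg
  have hgcont : ContinuousOn g (Set.Ioo a b) :=
    hψ.continuousOn_iteratedDerivWithin (by exact_mod_cast Nat.le_succ k) hud
  have hgdiff : DifferentiableOn ℝ g (Set.Ioo a b) :=
    hψ.differentiableOn_iteratedDerivWithin (by exact_mod_cast Nat.lt_succ_self k) hud
  have hgderiv : ∀ x ∈ Set.Ioo a b, c ≤ deriv g x := by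
    intro x hx
    rw [← derivWithin_of_isOpen hopen hx, ← iteratedDerivWithin_succ]
    exact hD x hx
  have hgrow : ∀ x ∈ Set.Ioo a b, ∀ y ∈ Set.Ioo a b, x ≤ y → c * (y - x) ≤ g y - g x := by
    intro x hx y hy hxy
    exact (convex_Ioo a b).mul_sub_le_image_sub_of_le_deriv hgcont
      (by rwa [interior_Ioo]) (fun z hz => hgderiv z (by rwa [interior_Ioo] at hz)) x hx y hy hxy
  set δ : ℝ := (c * lam) ^ (-(1:ℝ)/((k:ℝ)+1)) with hδ
  have hδpos : 0 < δ := Real.rpow_pos_of_pos (mul_pos hc hlam) _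
  have h2k : (1:ℝ) ≤ 2 ^ (k-1) := one_le_pow₀ (by norm_num)
  have h2k' : (1:ℝ) ≤ 2 ^ k := one_le_pow₀ (by norm_num)
  have hck : (1:ℝ) ≤ 5 * 2 ^ (k-1) - 2 := by linarith
  have hck2 : (2:ℝ)^(k-1) * 2 = 2^k := by rw [← pow_succ]; congr 1; omega
  have Hsub : ∀ p q : ℝ, a ≤ p → p < q → q ≤ b → (∀ x ∈ Set.Ioo p q, c*δ ≤ |g x|) →
      ‖∫ x in p..q, Complex.exp (Complex.I * lam * ψ x)‖ ≤ (5 * 2 ^ (k-1) - 2 : ℝ) * δ := by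
    intro p q hap hpq hqb habs
    have hsub : Set.Ioo p q ⊆ Set.Ioo a b := Set.Ioo_subset_Ioo hap hqb
    have htrans : ∀ (n : ℕ), ∀ x ∈ Set.Ioo p q,
        iteratedDerivWithin n ψ (Set.Ioo p q) x = iteratedDerivWithin n ψ (Set.Ioo a b) x := by
      intro n x hx
      rw [vdc_iteratedDerivWithin_of_isOpen isOpen_Ioo hx,
        vdc_iteratedDerivWithin_of_isOpen isOpen_Ioo (hsub hx)]
    have h1 := ih p q hpq ψ (hψ.mono hsub)
      (fun x hx => by rw [htrans (k+1) x hx]; exact le_trans (le_of_lt hc) (hD x (hsub hx)))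
      (c*δ) (by positivity)
      (fun x hx => by rw [htrans k x hx]; exact habs x hx) lam hlam
    calc ‖∫ x in p..q, Complex.exp (Complex.I * lam * ψ x)‖
        ≤ (5 * 2 ^ (k-1) - 2 : ℝ) * (c * δ * lam) ^ (-(1:ℝ)/(k:ℝ)) := h1
      _ = (5 * 2 ^ (k-1) - 2 : ℝ) * δ := by rw [hδ, vdc_rpow_key hc hlam k hk]
  have Hsplit : ∀ u v : ℝ, a ≤ u → u ≤ v → v ≤ b →
      ‖∫ x in a..b, Complex.exp (Complex.I * lam * ψ x)‖ ≤
      ‖∫ x in a..u, Complex.exp (Complex.I * lam * ψ x)‖ +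
      ‖∫ x in u..v, Complex.exp (Complex.I * lam * ψ x)‖ +
      ‖∫ x in v..b, Complex.exp (Complex.I * lam * ψ x)‖ := by
    intro u v hau huv hvb
    have hcψ := hψ.continuousOn
    have i1 := vdc_integrable (lam := lam) hcψ (le_refl a) (le_trans huv hvb) hau
    have i2 := vdc_integrable (lam := lam) hcψ hau hvb huv
    have i3 := vdc_integrable (lam := lam) hcψ (le_trans hau huv) (le_refl b) hvb
    have i12 := vdc_integrable (lam := lam) hcψ (le_refl a) hvb (le_trans hau huv)
    have e1 := intervalIntegral.integral_add_adjacent_intervals i1 i2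
    have e2 := intervalIntegral.integral_add_adjacent_intervals i12 i3
    rw [← e2, ← e1]
    exact le_trans (norm_add_le _ _) (by gcongr; exact norm_add_le _ _)
  by_cases hzero : ∃ x₀ ∈ Set.Ioo a b, g x₀ = 0
  · obtain ⟨x₀, hx₀, hgx₀⟩ := hzero
    set u : ℝ := max a (x₀ - δ) with hu
    set v : ℝ := min b (x₀ + δ) with hv
    have hau : a ≤ u := le_max_left _ _
    have hux : u ≤ x₀ := max_le (le_of_lt hx₀.1) (by linarith)
    have hxv : x₀ ≤ v := le_min (le_of_lt hx₀.2) (by linarith)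
    have hvb : v ≤ b := min_le_left _ _
    have hu2 : x₀ - δ ≤ u := le_max_right _ _
    have hv2 : v ≤ x₀ + δ := min_le_right _ _
    have hleft : ‖∫ x in a..u, Complex.exp (Complex.I * lam * ψ x)‖
        ≤ (5*2^(k-1)-2 : ℝ) * δ := by
      rcases eq_or_lt_of_le hau with heq | hlt
      · rw [← heq, intervalIntegral.integral_same, norm_zero]
        positivity
      · have huval : u = x₀ - δ := by
          rcases le_or_gt a (x₀ - δ) with h | h
          · rw [hu, max_eq_right h]
          · exfalso; rw [hu, max_eq_left (le_of_lt h)] at hlt; exact lt_irrefl a hlt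
        apply Hsub a u (le_refl a) hlt (le_trans hux (le_of_lt hx₀.2))
        intro x hx
        have hxI : x ∈ Set.Ioo a b := ⟨hx.1, lt_trans hx.2 (lt_of_le_of_lt hux hx₀.2)⟩
        have hgle := hgrow x hxI x₀ hx₀ (le_of_lt (lt_of_lt_of_le hx.2 hux))
        rw [hgx₀] at hgle
        have hxu : x < u := hx.2
        rw [huval] at hxu
        have hle : c * δ ≤ -(g x) := by nlinarith
        exact le_trans hle (neg_le_abs _)
    have hright : ‖∫ x in v..b, Complex.exp (Complex.I * lam * ψ x)‖
        ≤ (5*2^(k-1)-2 : ℝ) * δ := by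
      rcases eq_or_lt_of_le hvb with heq | hlt
      · rw [heq, intervalIntegral.integral_same, norm_zero]
        positivity
      · have hvval : v = x₀ + δ := by
          rcases le_or_gt (x₀ + δ) b with h | h
          · rw [hv, min_eq_right h]
          · exfalso; rw [hv, min_eq_left (le_of_lt h)] at hlt; exact lt_irrefl b hlt
        apply Hsub v b (le_trans (le_of_lt hx₀.1) hxv) hlt (le_refl b)
        intro x hx
        have hxI : x ∈ Set.Ioo a b := ⟨lt_trans (lt_of_lt_of_le hx₀.1 hxv) hx.1, hx.2⟩
        have hgle := hgrow x₀ hx₀ x hxI (le_of_lt (lt_of_le_of_lt hxv hx.1))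
        rw [hgx₀] at hgle
        have hxu : v < x := hx.1
        rw [hvval] at hxu
        have hle : c * δ ≤ g x := by nlinarith
        exact le_trans hle (le_abs_self _)
    have hmid : ‖∫ x in u..v, Complex.exp (Complex.I * lam * ψ x)‖ ≤ 2 * δ := by
      have := vdc_triv (p := u) (q := v) lam ψ (le_trans hux hxv)
      have h2 : v - u ≤ 2 * δ := by linarith
      linarith
    calc ‖∫ x in a..b, Complex.exp (Complex.I * lam * ψ x)‖
        ≤ ‖∫ x in a..u, Complex.exp (Complex.I * lam * ψ x)‖ +
          ‖∫ x in u..v, Complex.exp (Complex.I * lam * ψ x)‖ +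
          ‖∫ x in v..b, Complex.exp (Complex.I * lam * ψ x)‖ :=
          Hsplit u v hau (le_trans hux hxv) hvb
      _ ≤ (5*2^(k-1)-2 : ℝ) * δ + 2 * δ + (5*2^(k-1)-2 : ℝ) * δ :=
          add_le_add (add_le_add hleft hmid) hright
      _ = (5 * 2 ^ k - 2 : ℝ) * δ := by rw [← hck2]; ring
  · push_neg at hzero
    rcases vdc_sign hgcont hzero with hpos | hneg
    · rcases le_or_gt b (a + δ) with hb | hb
      · have := vdc_triv (p := a) (q := b) lam ψ (le_of_lt hab)
        have h1 : b - a ≤ δ := by linarith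
        nlinarith
      · have hright : ‖∫ x in (a+δ)..b, Complex.exp (Complex.I * lam * ψ x)‖
            ≤ (5*2^(k-1)-2 : ℝ) * δ := by
          apply Hsub (a+δ) b (by linarith) hb (le_refl b)
          intro x hx
          have hxI : x ∈ Set.Ioo a b := ⟨by linarith [hx.1], hx.2⟩
          have hyI : x - δ ∈ Set.Ioo a b := ⟨by linarith [hx.1], by linarith [hx.2]⟩
          have hgle := hgrow (x - δ) hyI x hxI (by linarith)
          have hgy := hpos (x - δ) hyI
          have hle : c * δ ≤ g x := by nlinarith
          exact le_trans hle (le_abs_self _)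
        have hleft := vdc_triv (p := a) (q := a + δ) lam ψ (by linarith)
        calc ‖∫ x in a..b, Complex.exp (Complex.I * lam * ψ x)‖
            ≤ ‖∫ x in a..(a+δ), Complex.exp (Complex.I * lam * ψ x)‖ +
              ‖∫ x in (a+δ)..(a+δ), Complex.exp (Complex.I * lam * ψ x)‖ +
              ‖∫ x in (a+δ)..b, Complex.exp (Complex.I * lam * ψ x)‖ :=
              Hsplit (a+δ) (a+δ) (by linarith) (le_refl _) (le_of_lt hb)
          _ ≤ δ + 0 + (5*2^(k-1)-2 : ℝ) * δ := by
              apply add_le_add (add_le_add ?_ ?_) hright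
              · linarith
              · rw [intervalIntegral.integral_same, norm_zero]
          _ ≤ (5 * 2 ^ k - 2 : ℝ) * δ := by nlinarith
    · rcases le_or_gt b (a + δ) with hb | hb
      · have := vdc_triv (p := a) (q := b) lam ψ (le_of_lt hab)
        have h1 : b - a ≤ δ := by linarith
        nlinarith
      · have hleft : ‖∫ x in a..(b-δ), Complex.exp (Complex.I * lam * ψ x)‖
            ≤ (5*2^(k-1)-2 : ℝ) * δ := by
          apply Hsub a (b-δ) (le_refl a) (by linarith) (by linarith)
          intro x hx
          have hxI : x ∈ Set.Ioo a b := ⟨hx.1, by linarith [hx.2]⟩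
          have hyI : x + δ ∈ Set.Ioo a b := ⟨by linarith [hx.1], by linarith [hx.2]⟩
          have hgle := hgrow x hxI (x + δ) hyI (by linarith)
          have hgy := hneg (x + δ) hyI
          have hle : c * δ ≤ -(g x) := by nlinarith
          exact le_trans hle (neg_le_abs _)
        have hright := vdc_triv (p := b - δ) (q := b) lam ψ (by linarith)
        calc ‖∫ x in a..b, Complex.exp (Complex.I * lam * ψ x)‖
            ≤ ‖∫ x in a..(b-δ), Complex.exp (Complex.I * lam * ψ x)‖ +
              ‖∫ x in (b-δ)..(b-δ), Complex.exp (Complex.I * lam * ψ x)‖ +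
              ‖∫ x in (b-δ)..b, Complex.exp (Complex.I * lam * ψ x)‖ :=
              Hsplit (b-δ) (b-δ) (by linarith) (le_refl _) (by linarith)
          _ ≤ (5*2^(k-1)-2 : ℝ) * δ + 0 + δ := by
              apply add_le_add (add_le_add hleft ?_) ?_
              · rw [intervalIntegral.integral_same, norm_zero]
              · linarith
          _ ≤ (5 * 2 ^ k - 2 : ℝ) * δ := by nlinarith

lemma vdc_step' (k : ℕ) (hk : 1 ≤ k) (ih : VDCStatement k)
    (a b : ℝ) (hab : a < b) (ψ : ℝ → ℝ) (hψ : ContDiffOn ℝ (k+1) ψ (Set.Ioo a b))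
    (c : ℝ) (hc : 0 < c)
    (hlow : ∀ x ∈ Set.Ioo a b, c ≤ |iteratedDerivWithin (k+1) ψ (Set.Ioo a b) x|)
    (lam : ℝ) (hlam : 0 < lam) :
    ‖∫ x in a..b, Complex.exp (Complex.I * lam * ψ x)‖ ≤
      (5 * 2 ^ k - 2 : ℝ) * (c * lam) ^ (-(1:ℝ)/((k:ℝ)+1)) := by
  have hud : UniqueDiffOn ℝ (Set.Ioo a b) := isOpen_Ioo.uniqueDiffOn
  have hDcont : ContinuousOn (iteratedDerivWithin (k+1) ψ (Set.Ioo a b)) (Set.Ioo a b) :=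
    hψ.continuousOn_iteratedDerivWithin (by exact_mod_cast le_refl (k+1)) hud
  have hDne : ∀ x ∈ Set.Ioo a b, iteratedDerivWithin (k+1) ψ (Set.Ioo a b) x ≠ 0 := by
    intro x hx h
    have h2 := hlow x hx
    rw [h] at h2
    simp at h2
    linarith
  rcases vdc_sign hDcont hDne with hpos | hneg
  · have hD : ∀ x ∈ Set.Ioo a b, c ≤ iteratedDerivWithin (k+1) ψ (Set.Ioo a b) x := by
      intro x hx
      have h2 := hlow x hx
      rwa [_root_.abs_of_pos (hpos x hx)] at h2
    exact vdc_step_pos k hk ih a b hab ψ hψ c hc hD lam hlam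
  · have hD : ∀ x ∈ Set.Ioo a b, c ≤ iteratedDerivWithin (k+1) (-ψ) (Set.Ioo a b) x := by
      intro x hx
      rw [iteratedDerivWithin_neg]
      have h2 := hlow x hx
      rw [abs_of_neg (hneg x hx)] at h2
      linarith
    have hfun : ∀ x : ℝ, Complex.exp (Complex.I * lam * ((-ψ) x : ℝ)) =
        Complex.exp (-(Complex.I * lam * (ψ x : ℝ))) := by
      intro x
      congr 1
      simp only [Pi.neg_apply]
      push_cast
      ring
    have hnegint : ‖∫ x in a..b, Complex.exp (Complex.I * lam * ψ x)‖
        = ‖∫ x in a..b, Complex.exp (Complex.I * lam * ((-ψ) x : ℝ))‖ := by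
      rw [intervalIntegral.integral_congr (fun x _ => hfun x), vdc_conj a b lam ψ]
    rw [hnegint]
    exact vdc_step_pos k hk ih a b hab (-ψ) hψ.neg c hc hD lam hlam

lemma vdc_statement : ∀ k : ℕ, 1 ≤ k → VDCStatement k := by
  intro k
  induction k with
  | zero => intro h; exact absurd h (by omega)
  | succ n ihn =>
    intro _
    rcases Nat.eq_zero_or_pos n with h0 | h0
    · subst h0; exact vdc_one
    · intro a b hab ψ hψ hmono c hc hlow lam hlam
      have h1 := vdc_step' n h0 (ihn h0) a b hab ψ
        (hψ.of_le (by exact_mod_cast Nat.le_succ (n+1))) c hc hlow lam hlam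
      calc ‖∫ x in a..b, Complex.exp (Complex.I * lam * ψ x)‖
          ≤ (5 * 2 ^ n - 2 : ℝ) * (c * lam) ^ (-(1:ℝ)/((n:ℝ)+1)) := h1
        _ = (5 * 2 ^ (n + 1 - 1) - 2 : ℝ) * (c * lam) ^ (-(1:ℝ)/((n+1 : ℕ):ℝ)) := by
            rw [Nat.add_sub_cancel]
            congr 2
            push_cast
            ring

end VdCAux

/-- Van der Corput lemma: if `ψ` is real-valued, `Cᵏ` on `(a,b)` with `k ≥ 2` and
`|ψ⁽ᵏ⁾| ≥ c > 0` there, then for every `λ ≠ 0`,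
`|∫_a^b e^{iλψ(x)} dx| ≤ (5·2^{k-1} − 2) |cλ|^{-1/k}`. -/
theorem van_der_corput (a b : ℝ) (hab : a < b) (k : ℕ) (hk : 2 ≤ k)
    (ψ : ℝ → ℝ) (hψ : ContDiffOn ℝ k ψ (Set.Ioo a b))
    (c : ℝ) (hc : 0 < c)
    (hlow : ∀ x ∈ Set.Ioo a b, c ≤ |iteratedDerivWithin k ψ (Set.Ioo a b) x|)
    (lam : ℝ) (hlam : lam ≠ 0) :
    ‖∫ x in a..b, Complex.exp (Complex.I * lam * ψ x)‖
      ≤ (5 * 2 ^ (k - 1) - 2 : ℝ) * |c * lam| ^ (-(1 : ℝ) / k) := by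
  obtain ⟨j, hj1, rfl⟩ : ∃ j, 1 ≤ j ∧ k = j + 1 := ⟨k - 1, by omega, by omega⟩
  rcases hlam.lt_or_gt with hneg | hpos
  · have hmu : 0 < -lam := by linarith
    have h1 := vdc_step' j hj1 (vdc_statement j hj1) a b hab ψ (by exact_mod_cast hψ) c hc
      hlow (-lam) hmu
    have habs : |c * lam| = c * -lam := by
      rw [abs_of_neg (mul_neg_of_pos_of_neg hc hneg)]; ring
    have hfun : ∀ x : ℝ, Complex.exp (-(Complex.I * lam * (ψ x : ℝ)))
        = Complex.exp (Complex.I * (-lam : ℝ) * (ψ x : ℝ)) := by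
      intro x
      congr 1
      push_cast
      ring
    have heq : ‖∫ x in a..b, Complex.exp (Complex.I * lam * ψ x)‖
        = ‖∫ x in a..b, Complex.exp (Complex.I * (-lam : ℝ) * ψ x)‖ := by
      rw [← vdc_conj a b lam ψ]
      exact congrArg norm (intervalIntegral.integral_congr fun x _ => hfun x)
    rw [heq]
    calc ‖∫ x in a..b, Complex.exp (Complex.I * (-lam : ℝ) * ψ x)‖
        ≤ (5 * 2 ^ j - 2 : ℝ) * (c * -lam) ^ (-(1:ℝ)/((j:ℝ)+1)) := h1
      _ = (5 * 2 ^ (j + 1 - 1) - 2 : ℝ) * |c * lam| ^ (-(1 : ℝ) / ((j+1:ℕ):ℝ)) := by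
          rw [Nat.add_sub_cancel, habs]
          congr 2
          push_cast
          ring
  · have h1 := vdc_step' j hj1 (vdc_statement j hj1) a b hab ψ (by exact_mod_cast hψ) c hc
      hlow lam hpos
    have habs : |c * lam| = c * lam := abs_of_pos (mul_pos hc hpos)
    calc ‖∫ x in a..b, Complex.exp (Complex.I * lam * ψ x)‖
        ≤ (5 * 2 ^ j - 2 : ℝ) * (c * lam) ^ (-(1:ℝ)/((j:ℝ)+1)) := h1
      _ = (5 * 2 ^ (j + 1 - 1) - 2 : ℝ) * |c * lam| ^ (-(1 : ℝ) / ((j+1:ℕ):ℝ)) := by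
          rw [Nat.add_sub_cancel, habs]
          congr 2
          push_cast
          ring
end

section
/- (Van der Corput lemma with amplitude) Let ψ be real-valued and C^k on (a,b) with k ≥ 2 and |ψ^{(k)}(x)| ≥ c > 0 on (a,b), and let h be C¹ on (a,b). Then for every λ ≠ 0, |∫_a^b e^{iλψ(x)} h(x) dx| ≤ (5·2^{k-1} − 2)·|cλ|^{-1/k}·( |h(b)| + ∫_a^b |h'(x)| dx ). -/
namespace VDCaux

open Set MeasureTheory intervalIntegral Filter Topology


noncomputable def W (lam : ℝ) (ψ : ℝ → ℝ) (x : ℝ) : ℂ := Complex.exp (Complex.I * lam * ψ x)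

lemma norm_W (lam : ℝ) (ψ : ℝ → ℝ) (x : ℝ) : ‖W lam ψ x‖ = 1 := by
  simp [W, Complex.norm_exp]

lemma contOn_W {lam : ℝ} {ψ : ℝ → ℝ} {s : Set ℝ} (hψ : ContinuousOn ψ s) :
    ContinuousOn (W lam ψ) s := by
  apply Complex.continuous_exp.comp_continuousOn
  exact continuous_const.continuousOn.mul (Complex.continuous_ofReal.comp_continuousOn hψ)

lemma iteratedDeriv_eqOn_open {U : Set ℝ} (hU : IsOpen U) (n : ℕ) (ψ : ℝ → ℝ) :
    EqOn (iteratedDerivWithin n ψ U) (iteratedDeriv n ψ) U := fun x hx => by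
  rw [iteratedDerivWithin, iteratedDeriv, iteratedFDerivWithin_of_isOpen n hU hx]

lemma II_of_bdd {f : ℝ → ℂ} {a b M : ℝ} (hab : a ≤ b) (hcont : ContinuousOn f (Ioo a b))
    (hbdd : ∀ x ∈ Ioo a b, ‖f x‖ ≤ M) : IntervalIntegrable f volume a b := by
  rw [intervalIntegrable_iff_integrableOn_Ioo_of_le hab]
  haveI : IsFiniteMeasure (volume.restrict (Ioo a b)) :=
    ⟨by rw [Measure.restrict_apply_univ]; exact measure_Ioo_lt_top⟩
  exact Integrable.mono' (integrable_const M)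
    (hcont.aestronglyMeasurable measurableSet_Ioo)
    ((ae_restrict_iff' measurableSet_Ioo).mpr (Filter.Eventually.of_forall hbdd))

lemma intervalIntegral_conj {f : ℝ → ℂ} {a b : ℝ} :
    ∫ x in a..b, (starRingEnd ℂ) (f x) = (starRingEnd ℂ) (∫ x in a..b, f x) := by
  rw [intervalIntegral, intervalIntegral, integral_conj, integral_conj, map_sub]

lemma sign_const {f : ℝ → ℝ} {a b c : ℝ} (hab : a ≤ b) (hc : 0 < c)
    (hcont : ContinuousOn f (Icc a b)) (h : ∀ x ∈ Icc a b, c ≤ |f x|) :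
    (∀ x ∈ Icc a b, c ≤ f x) ∨ (∀ x ∈ Icc a b, f x ≤ -c) := by
  have hne : ∀ x ∈ Icc a b, f x ≠ 0 := by
    intro x hx h0
    have := h x hx; rw [h0, abs_zero] at this; linarith
  have hmem : a ∈ Icc a b := left_mem_Icc.mpr hab
  have hsub : ∀ x ∈ Icc a b, uIcc a x ⊆ Icc a b := fun x hx =>
    uIcc_subset_Icc hmem hx
  rcases lt_or_gt_of_ne (hne a hmem) with hneg | hpos
  · right
    intro x hx
    have hfx : f x < 0 := by
      by_contra hle
      push_neg at hle
      have h0m : (0:ℝ) ∈ uIcc (f a) (f x) := by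
        rw [mem_uIcc]; left; exact ⟨hneg.le, hle⟩
      obtain ⟨y, hy, hy0⟩ := intermediate_value_uIcc (hcont.mono (hsub x hx)) h0m
      exact hne y (hsub x hx hy) hy0
    have := h x hx; rw [abs_of_neg hfx] at this; linarith
  · left
    intro x hx
    have hfx : 0 < f x := by
      by_contra hle
      push_neg at hle
      have h0m : (0:ℝ) ∈ uIcc (f a) (f x) := by
        rw [mem_uIcc]; right; exact ⟨hle, hpos.le⟩
      obtain ⟨y, hy, hy0⟩ := intermediate_value_uIcc (hcont.mono (hsub x hx)) h0m
      exact hne y (hsub x hx hy) hy0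
    have := h x hx; rwa [abs_of_pos hfx] at this

lemma rpow_calc (k : ℕ) (hk : 1 ≤ k) (A : ℝ) (hA : 0 < A) :
    (A * A ^ (-(1:ℝ)/((k:ℝ)+1))) ^ (-(1:ℝ)/(k:ℝ)) = A ^ (-(1:ℝ)/((k:ℝ)+1)) := by
  have hk0 : (k:ℝ) ≠ 0 := Nat.cast_ne_zero.mpr (by omega)
  have hk1 : (k:ℝ) + 1 ≠ 0 := by positivity
  rw [show A * A ^ (-(1:ℝ)/((k:ℝ)+1)) = A ^ (1 + -(1:ℝ)/((k:ℝ)+1)) by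
    rw [Real.rpow_add hA, Real.rpow_one],
    ← Real.rpow_mul hA.le]
  congr 1
  field_simp
  ring

lemma vdc_base (U : Set ℝ) (hU : IsOpen U) (a b : ℝ) (hab : a ≤ b) (hsub : Icc a b ⊆ U)
    (ψ : ℝ → ℝ) (hψ : ContDiffOn ℝ 2 ψ U) (lam c : ℝ) (hlam : 0 < lam) (hc : 0 < c)
    (hd1 : ∀ x ∈ Icc a b, c ≤ |deriv ψ x|)
    (hsgn : (∀ x ∈ Icc a b, 0 ≤ deriv (deriv ψ) x) ∨ (∀ x ∈ Icc a b, deriv (deriv ψ) x ≤ 0)) :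
    ‖∫ x in a..b, W lam ψ x‖ ≤ 3 / (lam * c) := by
  have huIcc : uIcc a b = Icc a b := uIcc_of_le hab
  have hUd : UniqueDiffOn ℝ U := hU.uniqueDiffOn
  -- differentiability facts
  have hdψ : DifferentiableOn ℝ ψ U := hψ.differentiableOn (by norm_num)
  have hψ' : ContDiffOn ℝ 1 (deriv ψ) U := hψ.deriv_of_isOpen hU (by norm_num)
  have hdψ' : DifferentiableOn ℝ (deriv ψ) U := hψ'.differentiableOn (by norm_num)
  have hcψ' : ContinuousOn (deriv ψ) U := hψ'.continuousOn
  have hcψ'' : ContinuousOn (deriv (deriv ψ)) U := hψ'.continuousOn_deriv_of_isOpen hU (le_refl 1)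
  have hDA : ∀ x ∈ Icc a b, HasDerivAt ψ (deriv ψ x) x := fun x hx =>
    ((hdψ x (hsub hx)).differentiableAt (hU.mem_nhds (hsub hx))).hasDerivAt
  have hDA' : ∀ x ∈ Icc a b, HasDerivAt (deriv ψ) (deriv (deriv ψ) x) x := fun x hx =>
    ((hdψ' x (hsub hx)).differentiableAt (hU.mem_nhds (hsub hx))).hasDerivAt
  have hne : ∀ x ∈ Icc a b, deriv ψ x ≠ 0 := fun x hx h0 => by
    have := hd1 x hx; rw [h0, abs_zero] at this; linarith
  have hneC : ∀ x ∈ Icc a b, (Complex.I * lam * deriv ψ x) ≠ 0 := fun x hx => by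
    simp only [ne_eq, mul_eq_zero, Complex.I_ne_zero, Complex.ofReal_eq_zero, false_or]
    push_neg
    exact ⟨hlam.ne', hne x hx⟩
  -- u, v for integration by parts
  set u : ℝ → ℂ := fun x => (Complex.I * lam * deriv ψ x)⁻¹ with hu_def
  set u' : ℝ → ℂ := fun x =>
    -(Complex.I * lam * deriv (deriv ψ) x) / (Complex.I * lam * deriv ψ x) ^ 2 with hu'_def
  set v' : ℝ → ℂ := fun x => Complex.exp (Complex.I * lam * ψ x) * (Complex.I * lam * deriv ψ x)
    with hv'_def
  have hinner : ∀ x ∈ Icc a b, HasDerivAt (fun y => Complex.I * lam * (ψ y : ℂ))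
      (Complex.I * lam * deriv ψ x) x := fun x hx =>
    ((hDA x hx).ofReal_comp).const_mul (Complex.I * lam)
  have hinner' : ∀ x ∈ Icc a b, HasDerivAt (fun y => Complex.I * lam * Complex.ofReal (deriv ψ y))
      (Complex.I * lam * deriv (deriv ψ) x) x := fun x hx =>
    ((hDA' x hx).ofReal_comp).const_mul (Complex.I * lam)
  have hv : ∀ x ∈ uIcc a b, HasDerivAt (W lam ψ) (v' x) x := by
    intro x hx
    rw [huIcc] at hx
    exact (hinner x hx).cexp
  have hu : ∀ x ∈ uIcc a b, HasDerivAt u (u' x) x := by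
    intro x hx
    rw [huIcc] at hx
    have h5 := (hasDerivAt_const x (1:ℂ)).div (hinner' x hx) (hneC x hx)
    simp only [zero_mul, one_mul, zero_sub, one_div] at h5
    rw [show u = (fun x => (1:ℂ)) / fun y => Complex.I * ↑lam * ↑(deriv ψ y) by
      ext y; simp [hu_def]]
    exact h5
  -- integrability
  have hIccU : ContinuousOn (fun x => (Complex.I * (lam:ℂ) * deriv ψ x)) U :=
    continuous_const.continuousOn.mul (Complex.continuous_ofReal.comp_continuousOn hcψ')
  have hIccU'' : ContinuousOn (fun x => (Complex.I * (lam:ℂ) * deriv (deriv ψ) x)) U :=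
    continuous_const.continuousOn.mul (Complex.continuous_ofReal.comp_continuousOn hcψ'')
  have hu'cont : ContinuousOn u' (Icc a b) := by
    apply ContinuousOn.div
    · exact ((hIccU''.mono hsub).neg)
    · exact ((hIccU.mono hsub).pow 2)
    · intro x hx
      exact pow_ne_zero 2 (hneC x hx)
  have hu'int : IntervalIntegrable u' volume a b := by
    apply ContinuousOn.intervalIntegrable; rwa [huIcc]
  have hWcont : ContinuousOn (W lam ψ) (Icc a b) := by
    apply Complex.continuous_exp.comp_continuousOn
    exact continuous_const.continuousOn.mul
      (Complex.continuous_ofReal.comp_continuousOn ((hψ.continuousOn).mono hsub))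
  have hv'int : IntervalIntegrable v' volume a b := by
    apply ContinuousOn.intervalIntegrable
    rw [huIcc]
    exact hWcont.mul (hIccU.mono hsub)
  -- IBP
  have hIBP := intervalIntegral.integral_mul_deriv_eq_deriv_mul hu hv hu'int hv'int
  have hcongr : ∫ x in a..b, W lam ψ x = ∫ x in a..b, u x * v' x := by
    apply intervalIntegral.integral_congr
    intro x hx
    rw [huIcc] at hx
    simp only [hu_def, hv'_def, W]
    rw [mul_comm (Complex.exp (Complex.I * ↑lam * ↑(ψ x)))]
    exact (inv_mul_cancel_left₀ (hneC x hx) _).symm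
  rw [hcongr, hIBP]
  -- norms
  have hnu : ∀ x ∈ Icc a b, ‖u x‖ ≤ (lam * c)⁻¹ := by
    intro x hx
    simp only [hu_def, norm_inv, norm_mul, Complex.norm_I, one_mul,
      Complex.norm_real, Real.norm_eq_abs]
    rw [abs_of_pos hlam]
    apply inv_anti₀ (by positivity)
    exact mul_le_mul_of_nonneg_left (hd1 x hx) hlam.le
  -- the r = 1/psi' function and FTC
  set r : ℝ → ℝ := fun x => (deriv ψ x)⁻¹ with hr_def
  have hrDA : ∀ x ∈ uIcc a b, HasDerivAt r (-(deriv (deriv ψ) x) / (deriv ψ x) ^ 2) x := by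
    intro x hx; rw [huIcc] at hx
    exact (hDA' x hx).inv (hne x hx)
  have hr'int : IntervalIntegrable (fun x => -(deriv (deriv ψ) x) / (deriv ψ x) ^ 2) volume a b := by
    apply ContinuousOn.intervalIntegrable
    rw [huIcc]
    exact ((hcψ''.mono hsub).neg).div ((hcψ'.mono hsub).pow 2)
      (fun x hx => pow_ne_zero 2 (hne x hx))
  have hFTC : ∫ x in a..b, (-(deriv (deriv ψ) x) / (deriv ψ x) ^ 2) = r b - r a :=
    intervalIntegral.integral_eq_sub_of_hasDerivAt hrDA hr'int
  have hsignψ' := sign_const hab hc (hcψ'.mono hsub) hd1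
  have hamem : a ∈ Icc a b := left_mem_Icc.mpr hab
  have hbmem : b ∈ Icc a b := right_mem_Icc.mpr hab
  have hr_bound : r a - r b ≤ 1 / c ∧ r b - r a ≤ 1 / c := by
    rcases hsignψ' with hp | hn
    · have hra : r a ≤ c⁻¹ := inv_anti₀ hc (hp a hamem)
      have hrb : r b ≤ c⁻¹ := inv_anti₀ hc (hp b hbmem)
      have hra0 : 0 < r a := inv_pos.mpr (lt_of_lt_of_le hc (hp a hamem))
      have hrb0 : 0 < r b := inv_pos.mpr (lt_of_lt_of_le hc (hp b hbmem))
      rw [one_div]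
      constructor <;> linarith
    · have key : ∀ x ∈ Icc a b, -c⁻¹ ≤ r x ∧ r x < 0 := by
        intro x hx
        have hx0 : deriv ψ x < 0 := lt_of_le_of_lt (hn x hx) (by linarith)
        have h1 : (-(deriv ψ x))⁻¹ ≤ c⁻¹ := inv_anti₀ hc (by linarith [hn x hx])
        rw [inv_neg] at h1
        exact ⟨by simp only [hr_def]; linarith, inv_lt_zero.mpr hx0⟩
      obtain ⟨h1a, h2a⟩ := key a hamem
      obtain ⟨h1b, h2b⟩ := key b hbmem
      rw [one_div]
      constructor <;> linarith
  -- norm of the integral term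
  have hlamc : 0 < lam * c := mul_pos hlam hc
  have hnormint : ‖∫ x in a..b, u' x * W lam ψ x‖ ≤ 1 / (lam * c) := by
    have hptw : ∀ x ∈ Icc a b, ‖u' x * W lam ψ x‖
        = |deriv (deriv ψ) x| / (lam * (deriv ψ x) ^ 2) := by
      intro x hx
      rw [norm_mul, norm_W, mul_one]
      simp only [hu'_def, norm_div, norm_neg, norm_mul, norm_pow, Complex.norm_I,
        Complex.norm_real, Real.norm_eq_abs, one_mul]
      rw [abs_of_pos hlam, mul_pow, sq_abs]
      have h2 : deriv ψ x ≠ 0 := hne x hx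
      field_simp
    calc ‖∫ x in a..b, u' x * W lam ψ x‖
        ≤ ∫ x in a..b, ‖u' x * W lam ψ x‖ :=
          intervalIntegral.norm_integral_le_integral_norm hab
      _ ≤ 1 / (lam * c) := by
          rcases hsgn with hp | hn
          · have hcongr2 : ∫ x in a..b, ‖u' x * W lam ψ x‖
                = ∫ x in a..b, (-(1/lam)) * (-(deriv (deriv ψ) x) / (deriv ψ x) ^ 2) := by
              apply intervalIntegral.integral_congr
              intro x hx
              rw [huIcc] at hx
              show ‖u' x * W lam ψ x‖ = -(1 / lam) * (-deriv (deriv ψ) x / deriv ψ x ^ 2)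
              rw [hptw x hx, abs_of_nonneg (hp x hx)]
              have : (deriv ψ x) ≠ 0 := hne x hx
              field_simp
            rw [hcongr2, intervalIntegral.integral_const_mul, hFTC]
            have := hr_bound.1
            have h1lam : 0 < 1/lam := by positivity
            calc (-(1/lam)) * (r b - r a) = (1/lam) * (r a - r b) := by ring
              _ ≤ (1/lam) * (1/c) := by
                  apply mul_le_mul_of_nonneg_left hr_bound.1 h1lam.le
              _ = 1 / (lam * c) := by field_simp
          · have hcongr2 : ∫ x in a..b, ‖u' x * W lam ψ x‖
                = ∫ x in a..b, (1/lam) * (-(deriv (deriv ψ) x) / (deriv ψ x) ^ 2) := by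
              apply intervalIntegral.integral_congr
              intro x hx
              rw [huIcc] at hx
              show ‖u' x * W lam ψ x‖ = (1 / lam) * (-deriv (deriv ψ) x / deriv ψ x ^ 2)
              rw [hptw x hx, abs_of_nonpos (hn x hx)]
              have : (deriv ψ x) ≠ 0 := hne x hx
              field_simp
            rw [hcongr2, intervalIntegral.integral_const_mul, hFTC]
            have h1lam : 0 < 1/lam := by positivity
            calc (1/lam) * (r b - r a) ≤ (1/lam) * (1/c) := by
                  apply mul_le_mul_of_nonneg_left hr_bound.2 h1lam.le
              _ = 1 / (lam * c) := by field_simp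
  -- combine
  have hub : ‖u b * W lam ψ b‖ ≤ (lam*c)⁻¹ := by
    rw [norm_mul, norm_W, mul_one]; exact hnu b hbmem
  have hua : ‖u a * W lam ψ a‖ ≤ (lam*c)⁻¹ := by
    rw [norm_mul, norm_W, mul_one]; exact hnu a hamem
  calc ‖u b * W lam ψ b - u a * W lam ψ a - ∫ x in a..b, u' x * W lam ψ x‖
      ≤ ‖u b * W lam ψ b - u a * W lam ψ a‖ + ‖∫ x in a..b, u' x * W lam ψ x‖ := norm_sub_le _ _
    _ ≤ (‖u b * W lam ψ b‖ + ‖u a * W lam ψ a‖) + ‖∫ x in a..b, u' x * W lam ψ x‖ := by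
        have := norm_sub_le (u b * W lam ψ b) (u a * W lam ψ a)
        linarith
    _ ≤ (lam*c)⁻¹ + (lam*c)⁻¹ + 1/(lam*c) := by linarith
    _ = 3 / (lam * c) := by field_simp; ring

/-- statement of the induction hypothesis at level `k` -/
def Q (k : ℕ) : Prop :=
  ∀ (U : Set ℝ), IsOpen U → ∀ (ψ : ℝ → ℝ), ContDiffOn ℝ ((max k 2 : ℕ) : ℕ∞) ψ U →
    ∀ (a b : ℝ), a ≤ b → Icc a b ⊆ U → ∀ (lam c : ℝ), 0 < lam → 0 < c →
    (∀ x ∈ Icc a b, c ≤ |iteratedDeriv k ψ x|) →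
    (k = 1 → (∀ x ∈ Icc a b, 0 ≤ iteratedDeriv 2 ψ x) ∨
      (∀ x ∈ Icc a b, iteratedDeriv 2 ψ x ≤ 0)) →
    ‖∫ x in a..b, W lam ψ x‖ ≤ (5 * 2 ^ (k - 1) - 2 : ℝ) * (lam * c) ^ (-(1:ℝ)/(k:ℝ))

lemma step_pos (k : ℕ) (hk : 1 ≤ k) (IH : Q k)
    (U : Set ℝ) (hU : IsOpen U) (ψ : ℝ → ℝ) (hψ : ContDiffOn ℝ (k+1 : ℕ) ψ U)
    (a b : ℝ) (hab : a ≤ b) (hsub : Icc a b ⊆ U)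
    (lam c : ℝ) (hlam : 0 < lam) (hc : 0 < c)
    (hpos : ∀ x ∈ Icc a b, c ≤ iteratedDeriv (k+1) ψ x) :
    ‖∫ x in a..b, W lam ψ x‖
      ≤ (5 * 2 ^ k - 2 : ℝ) * (lam * c) ^ (-(1:ℝ)/((k:ℝ)+1)) := by
  have hUd : UniqueDiffOn ℝ U := hU.uniqueDiffOn
  set δ : ℝ := (lam * c) ^ (-(1:ℝ)/((k:ℝ)+1)) with hδ_def
  have hlamc : 0 < lam * c := mul_pos hlam hc
  have hδ : 0 < δ := Real.rpow_pos_of_pos hlamc _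
  set C : ℝ := (5 * 2 ^ (k - 1) - 2 : ℝ) with hC_def
  have hC3 : (3:ℝ) ≤ C := by
    have h1 : (1:ℝ) ≤ 2 ^ (k-1) := one_le_pow₀ one_le_two
    simp only [hC_def]; nlinarith
  have hCC : (5 * 2 ^ k - 2 : ℝ) = 2 * C + 2 := by
    have h2 : (2:ℝ) ^ k = 2 * 2 ^ (k - 1) := by
      conv_lhs => rw [show k = (k-1)+1 by omega]
      rw [pow_succ]; ring
    simp only [hC_def]
    rw [h2]; ring
  -- differentiability of φk := iteratedDeriv k ψ
  set φk : ℝ → ℝ := iteratedDeriv k ψ with hφk_def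
  have hφkW : DifferentiableOn ℝ (iteratedDerivWithin k ψ U) U :=
    hψ.differentiableOn_iteratedDerivWithin (by exact_mod_cast lt_add_one k) hUd
  have hφkD : DifferentiableOn ℝ φk U :=
    hφkW.congr (fun x hx => (iteratedDeriv_eqOn_open hU k ψ hx).symm)
  have hφkC : ContinuousOn φk U := hφkD.continuousOn
  have hφkDA : ∀ x ∈ U, DifferentiableAt ℝ φk x := fun x hx =>
    (hφkD x hx).differentiableAt (hU.mem_nhds hx)
  -- growth estimate
  have hgrow : ∀ x ∈ Icc a b, ∀ y ∈ Icc a b, x ≤ y → c * (y - x) ≤ φk y - φk x := by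
    intro x hx y hy hxy
    have hmono : MonotoneOn (fun z => φk z - c * z) (Icc a b) := by
      apply monotoneOn_of_deriv_nonneg (convex_Icc a b)
      · exact ((hφkC.mono hsub).sub (continuous_const.mul continuous_id).continuousOn)
      · intro z hz
        rw [interior_Icc] at hz
        exact ((hφkDA z (hsub (Ioo_subset_Icc_self hz))).sub
          (differentiableAt_fun_id.const_mul c)).differentiableWithinAt
      · intro z hz
        rw [interior_Icc] at hz
        have hzU : z ∈ U := hsub (Ioo_subset_Icc_self hz)
        rw [deriv_fun_sub (hφkDA z hzU) (differentiableAt_fun_id.const_mul c)]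
        have hd1 : deriv (fun w => c * w) z = c := by
          rw [deriv_const_mul _ differentiableAt_fun_id, deriv_id'', mul_one]
        rw [hd1]
        have hd2 : deriv φk z = iteratedDeriv (k+1) ψ z := by
          rw [hφk_def, ← iteratedDeriv_succ]
        rw [hd2]
        have := hpos z (Ioo_subset_Icc_self hz)
        linarith
    have := hmono hx hy hxy
    simp only at this
    linarith
  -- integrability of W on subintervals
  have hWint : ∀ u v, u ∈ Icc a b → v ∈ Icc a b → IntervalIntegrable (W lam ψ) volume u v := by
    intro u v hu hv
    apply ContinuousOn.intervalIntegrable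
    exact (contOn_W (hψ.continuousOn)).mono ((uIcc_subset_Icc hu hv).trans hsub)
  -- trivial bound
  have htriv : ∀ u v, u ∈ Icc a b → v ∈ Icc a b → u ≤ v →
      ‖∫ x in u..v, W lam ψ x‖ ≤ v - u := by
    intro u v hu hv huv
    have := intervalIntegral.norm_integral_le_of_norm_le_const
      (C := 1) (f := W lam ψ) (a := u) (b := v) (fun x _ => le_of_eq (norm_W lam ψ x))
    rwa [one_mul, abs_of_nonneg (by linarith)] at this
  -- bound via IH
  have hIH : ∀ u v, u ∈ Icc a b → v ∈ Icc a b → u ≤ v →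
      (∀ x ∈ Icc u v, c * δ ≤ |φk x|) → ‖∫ x in u..v, W lam ψ x‖ ≤ C * δ := by
    intro u v hu hv huv hcond
    have husub : Icc u v ⊆ Icc a b := Icc_subset_Icc hu.1 hv.2
    have h1 := IH U hU ψ (hψ.of_le (by exact_mod_cast Nat.cast_le.mpr (by omega : max k 2 ≤ k + 1)))
      u v huv (husub.trans hsub) lam (c * δ) hlam (by positivity) hcond
      (by
        intro hk1
        subst hk1
        left
        intro x hx
        have := hpos x (husub hx)
        norm_num at this ⊢
        linarith)
    rw [show lam * (c * δ) = (lam * c) * δ by ring, hδ_def] at h1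
    rwa [rpow_calc k hk (lam * c) hlamc] at h1
  -- membership helpers
  have hamem : a ∈ Icc a b := left_mem_Icc.mpr hab
  have hbmem : b ∈ Icc a b := right_mem_Icc.mpr hab
  -- main splitting
  have key : ‖∫ x in a..b, W lam ψ x‖ ≤ 2 * C * δ + 2 * δ := by
    by_cases hA : 0 ≤ φk a
    · -- φk nonnegative at a
      by_cases hbd : b ≤ a + δ
      · have := htriv a b hamem hbmem hab
        nlinarith
      · push_neg at hbd
        have hm : a + δ ∈ Icc a b := ⟨by linarith, hbd.le⟩
        have hsplit := intervalIntegral.integral_add_adjacent_intervals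
          (hWint a (a+δ) hamem hm) (hWint (a+δ) b hm hbmem)
        have h1 := htriv a (a+δ) hamem hm (by linarith)
        have h2 : ‖∫ x in (a+δ)..b, W lam ψ x‖ ≤ C * δ := by
          apply hIH (a+δ) b hm hbmem hbd.le
          intro x hx
          have hxm : x ∈ Icc a b := Icc_subset_Icc hm.1 hbmem.2 hx
          have hg := hgrow a hamem x hxm (by linarith [hx.1])
          have : c * δ ≤ φk x := by nlinarith [hx.1]
          exact le_trans this (le_abs_self _)
        calc ‖∫ x in a..b, W lam ψ x‖
            = ‖(∫ x in a..(a+δ), W lam ψ x) + ∫ x in (a+δ)..b, W lam ψ x‖ := by rw [hsplit]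
          _ ≤ ‖∫ x in a..(a+δ), W lam ψ x‖ + ‖∫ x in (a+δ)..b, W lam ψ x‖ := norm_add_le _ _
          _ ≤ δ + C * δ := by
              have : a + δ - a = δ := by ring
              rw [this] at h1
              linarith
          _ ≤ 2 * C * δ + 2 * δ := by nlinarith
    · push_neg at hA
      by_cases hB : φk b ≤ 0
      · -- φk nonpositive at b
        by_cases hbd : b - δ ≤ a
        · have := htriv a b hamem hbmem hab
          nlinarith
        · push_neg at hbd
          have hm : b - δ ∈ Icc a b := ⟨hbd.le, by linarith⟩
          have hsplit := intervalIntegral.integral_add_adjacent_intervals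
            (hWint a (b-δ) hamem hm) (hWint (b-δ) b hm hbmem)
          have h1 := htriv (b-δ) b hm hbmem (by linarith)
          have h2 : ‖∫ x in a..(b-δ), W lam ψ x‖ ≤ C * δ := by
            apply hIH a (b-δ) hamem hm hbd.le
            intro x hx
            have hxm : x ∈ Icc a b := Icc_subset_Icc hamem.1 hm.2 hx
            have hg := hgrow x hxm b hbmem (by linarith [hx.2])
            have : c * δ ≤ -φk x := by nlinarith [hx.2]
            exact le_trans this (neg_le_abs _)
          calc ‖∫ x in a..b, W lam ψ x‖
              = ‖(∫ x in a..(b-δ), W lam ψ x) + ∫ x in (b-δ)..b, W lam ψ x‖ := by rw [hsplit]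
            _ ≤ ‖∫ x in a..(b-δ), W lam ψ x‖ + ‖∫ x in (b-δ)..b, W lam ψ x‖ := norm_add_le _ _
            _ ≤ C * δ + δ := by
                have : b - (b - δ) = δ := by ring
                rw [this] at h1
                linarith
            _ ≤ 2 * C * δ + 2 * δ := by nlinarith
      · -- sign change: there is a zero x₀
        push_neg at hB
        obtain ⟨x₀, hx₀mem, hx₀⟩ : ∃ x₀ ∈ Icc a b, φk x₀ = 0 := by
          have h0 : (0:ℝ) ∈ Icc (φk a) (φk b) := ⟨hA.le, hB.le⟩
          obtain ⟨x₀, hm, he⟩ := intermediate_value_Icc hab (hφkC.mono hsub) h0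
          exact ⟨x₀, hm, he⟩
        set x₁ : ℝ := max a (x₀ - δ) with hx₁_def
        set x₂ : ℝ := min b (x₀ + δ) with hx₂_def
        have hax₁ : a ≤ x₁ := le_max_left _ _
        have hx₁x₀ : x₁ ≤ x₀ := max_le hx₀mem.1 (by linarith)
        have hx₀x₂ : x₀ ≤ x₂ := le_min hx₀mem.2 (by linarith)
        have hx₂b : x₂ ≤ b := min_le_left _ _
        have hx₁mem : x₁ ∈ Icc a b := ⟨hax₁, le_trans hx₁x₀ hx₀mem.2⟩
        have hx₂mem : x₂ ∈ Icc a b := ⟨le_trans hx₀mem.1 hx₀x₂, hx₂b⟩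
        have hx₁x₂ : x₁ ≤ x₂ := le_trans hx₁x₀ hx₀x₂
        have hsplit2 := intervalIntegral.integral_add_adjacent_intervals
          (hWint x₁ x₂ hx₁mem hx₂mem) (hWint x₂ b hx₂mem hbmem)
        have hsplit1 := intervalIntegral.integral_add_adjacent_intervals
          (hWint a x₁ hamem hx₁mem) ((hWint x₁ x₂ hx₁mem hx₂mem).trans (hWint x₂ b hx₂mem hbmem))
        have hmid : ‖∫ x in x₁..x₂, W lam ψ x‖ ≤ 2 * δ := by
          have := htriv x₁ x₂ hx₁mem hx₂mem hx₁x₂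
          have hub : x₂ - x₁ ≤ 2 * δ := by
            have h1 : x₀ - δ ≤ x₁ := le_max_right _ _
            have h2 : x₂ ≤ x₀ + δ := min_le_right _ _
            linarith
          linarith
        have hleft : ‖∫ x in a..x₁, W lam ψ x‖ ≤ C * δ := by
          by_cases hdeg : x₀ - δ ≤ a
          · have : x₁ = a := by rw [hx₁_def]; exact max_eq_left (by linarith)
            rw [this, intervalIntegral.integral_same]
            rw [norm_zero]
            positivity
          · push_neg at hdeg
            have hx₁eq : x₁ = x₀ - δ := by rw [hx₁_def]; exact max_eq_right (by linarith)
            apply hIH a x₁ hamem hx₁mem hax₁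
            intro x hx
            have hxm : x ∈ Icc a b := Icc_subset_Icc hamem.1 hx₁mem.2 hx
            have hg := hgrow x hxm x₀ hx₀mem (le_trans hx.2 hx₁x₀)
            have : c * δ ≤ -φk x := by
              rw [hx₀] at hg
              have hxx : x ≤ x₀ - δ := by rw [← hx₁eq]; exact hx.2
              nlinarith
            exact le_trans this (neg_le_abs _)
        have hright : ‖∫ x in x₂..b, W lam ψ x‖ ≤ C * δ := by
          by_cases hdeg : b ≤ x₀ + δ
          · have : x₂ = b := by rw [hx₂_def]; exact min_eq_left (by linarith)
            rw [this, intervalIntegral.integral_same]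
            rw [norm_zero]
            positivity
          · push_neg at hdeg
            have hx₂eq : x₂ = x₀ + δ := by rw [hx₂_def]; exact min_eq_right (by linarith)
            apply hIH x₂ b hx₂mem hbmem hx₂b
            intro x hx
            have hxm : x ∈ Icc a b := Icc_subset_Icc hx₂mem.1 hbmem.2 hx
            have hg := hgrow x₀ hx₀mem x hxm (le_trans hx₀x₂ hx.1)
            have : c * δ ≤ φk x := by
              rw [hx₀] at hg
              have hxx : x₀ + δ ≤ x := by rw [← hx₂eq]; exact hx.1
              nlinarith
            exact le_trans this (le_abs_self _)
        calc ‖∫ x in a..b, W lam ψ x‖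
            = ‖(∫ x in a..x₁, W lam ψ x) + ((∫ x in x₁..x₂, W lam ψ x) + ∫ x in x₂..b, W lam ψ x)‖ := by
              rw [hsplit2, hsplit1]
          _ ≤ ‖∫ x in a..x₁, W lam ψ x‖ + (‖∫ x in x₁..x₂, W lam ψ x‖ + ‖∫ x in x₂..b, W lam ψ x‖) := by
              refine le_trans (norm_add_le _ _) ?_
              exact add_le_add le_rfl (norm_add_le _ _)
          _ ≤ C * δ + (2 * δ + C * δ) := by linarith
          _ = 2 * C * δ + 2 * δ := by ring
  calc ‖∫ x in a..b, W lam ψ x‖ ≤ 2 * C * δ + 2 * δ := key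
    _ = (5 * 2 ^ k - 2 : ℝ) * δ := by rw [hCC]; ring


lemma W_neg (lam : ℝ) (ψ : ℝ → ℝ) (x : ℝ) : W lam (-ψ) x = (starRingEnd ℂ) (W lam ψ x) := by
  simp only [W, Pi.neg_apply, Complex.ofReal_neg]
  rw [← Complex.exp_conj]
  congr 1
  rw [map_mul, map_mul, Complex.conj_I, Complex.conj_ofReal, Complex.conj_ofReal]
  ring

lemma norm_int_W_neg (lam : ℝ) (ψ : ℝ → ℝ) (a b : ℝ) :
    ‖∫ x in a..b, W lam (-ψ) x‖ = ‖∫ x in a..b, W lam ψ x‖ := by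
  simp_rw [W_neg]
  rw [intervalIntegral_conj]
  exact RCLike.norm_conj _

lemma core : ∀ (k : ℕ), 1 ≤ k → Q k := by
  intro k hk
  induction k, hk using Nat.le_induction with
  | base =>
    intro U hU ψ hψ a b hab hsub lam c hlam hc hlow hsgn
    have h2 : ContDiffOn ℝ 2 ψ U := by
      have h : (max 1 2 : ℕ) = 2 := by norm_num
      rwa [h] at hψ
    have hd1 : ∀ x ∈ Icc a b, c ≤ |deriv ψ x| := by
      intro x hx; have := hlow x hx; rwa [iteratedDeriv_one] at this
    have hsgn' := hsgn rfl
    have hsgn2 : (∀ x ∈ Icc a b, 0 ≤ deriv (deriv ψ) x) ∨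
        (∀ x ∈ Icc a b, deriv (deriv ψ) x ≤ 0) := by
      have he : iteratedDeriv 2 ψ = deriv (deriv ψ) := by
        rw [show (2:ℕ) = 1 + 1 from rfl, iteratedDeriv_succ, iteratedDeriv_one]
      rwa [he] at hsgn'
    have hb := vdc_base U hU a b hab hsub ψ h2 lam c hlam hc hd1 hsgn2
    refine le_trans hb (le_of_eq ?_)
    rw [show (5 * 2 ^ (1 - 1) - 2 : ℝ) = 3 by norm_num,
      show (-(1:ℝ)/((1:ℕ):ℝ)) = -1 by norm_num, Real.rpow_neg_one, div_eq_mul_inv]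
  | succ k hk IH =>
    intro U hU ψ hψ a b hab hsub lam c hlam hc hlow hsgn2
    have hψ' : ContDiffOn ℝ ((k+1 : ℕ) : ℕ∞) ψ U := by
      have h : (max (k+1) 2 : ℕ) = k+1 := by omega
      rwa [h] at hψ
    have hcont : ContinuousOn (iteratedDeriv (k+1) ψ) (Icc a b) := by
      have h1 : ContinuousOn (iteratedDerivWithin (k+1) ψ U) U :=
        hψ'.continuousOn_iteratedDerivWithin (le_refl _) hU.uniqueDiffOn
      exact (h1.congr (fun x hx => (iteratedDeriv_eqOn_open hU (k+1) ψ hx).symm)).mono hsub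
    have e1 : ((k+1:ℕ):ℝ) = (k:ℝ)+1 := by push_cast; ring
    have e2 : (k+1) - 1 = k := by omega
    rcases sign_const hab hc hcont hlow with hp | hn
    · have hb := step_pos k hk IH U hU ψ hψ' a b hab hsub lam c hlam hc hp
      rw [e2, e1]
      exact hb
    · have hp' : ∀ x ∈ Icc a b, c ≤ iteratedDeriv (k+1) (-ψ) x := by
        intro x hx
        have he : iteratedDeriv (k+1) (-ψ) x = -iteratedDeriv (k+1) ψ x :=
          iteratedDeriv_neg _ _ _
        rw [he]
        have := hn x hx
        linarith
      have hb := step_pos k hk IH U hU (-ψ) (hψ'.neg) a b hab hsub lam c hlam hc hp'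
      rw [norm_int_W_neg] at hb
      rw [e2, e1]
      exact hb

lemma core' (k : ℕ) (hk : 2 ≤ k) (a b : ℝ) (ψ : ℝ → ℝ) (hψ : ContDiffOn ℝ k ψ (Ioo a b))
    (c : ℝ) (hc : 0 < c)
    (hlow : ∀ x ∈ Ioo a b, c ≤ |iteratedDerivWithin k ψ (Ioo a b) x|)
    (lam : ℝ) (hlam : 0 < lam) {u v : ℝ} (hau : a < u) (huv : u ≤ v) (hvb : v < b) :
    ‖∫ x in u..v, W lam ψ x‖
      ≤ (5 * 2 ^ (k - 1) - 2 : ℝ) * (lam * c) ^ (-(1:ℝ)/(k:ℝ)) := by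
  have hsub : Icc u v ⊆ Ioo a b := Icc_subset_Ioo hau hvb
  apply core k (by omega) (Ioo a b) isOpen_Ioo ψ ?_ u v huv hsub lam c hlam hc ?_ ?_
  · rw [show max k 2 = k by omega]; exact hψ
  · intro x hx
    have hxI : x ∈ Ioo a b := hsub hx
    have := hlow x hxI
    rwa [iteratedDeriv_eqOn_open isOpen_Ioo k ψ hxI] at this
  · intro h1; omega

lemma amp_sub (k : ℕ) (hk : 2 ≤ k) (a b : ℝ) (hab : a < b) (ψ : ℝ → ℝ)
    (hψ : ContDiffOn ℝ k ψ (Ioo a b)) (c : ℝ) (hc : 0 < c)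
    (hlow : ∀ x ∈ Ioo a b, c ≤ |iteratedDerivWithin k ψ (Ioo a b) x|)
    (h : ℝ → ℝ) (hh : ContDiffOn ℝ 1 h (Icc a b))
    (lam : ℝ) (hlam : 0 < lam) {u v : ℝ} (hau : a < u) (huv : u ≤ v) (hvb : v < b) :
    ‖∫ x in u..v, W lam ψ x * h x‖
      ≤ ((5 * 2 ^ (k - 1) - 2 : ℝ) * (lam * c) ^ (-(1:ℝ)/(k:ℝ))) *
        (|h v| + ∫ x in u..v, |derivWithin h (Icc a b) x|) := by
  set K : ℝ := (5 * 2 ^ (k - 1) - 2 : ℝ) * (lam * c) ^ (-(1:ℝ)/(k:ℝ)) with hK_def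
  have hC3 : (3:ℝ) ≤ 5 * 2 ^ (k-1) - 2 := by
    have h1 : (1:ℝ) ≤ 2 ^ (k-1) := one_le_pow₀ one_le_two
    nlinarith
  have hKnn : 0 ≤ K := by
    apply mul_nonneg (by linarith)
    exact (Real.rpow_pos_of_pos (mul_pos hlam hc) _).le
  have hIoo : Icc u v ⊆ Ioo a b := Icc_subset_Ioo hau hvb
  have hIcc : Icc u v ⊆ Icc a b := hIoo.trans Ioo_subset_Icc_self
  have huIcc : uIcc u v = Icc u v := uIcc_of_le huv
  have humem : u ∈ Icc u v := left_mem_Icc.mpr huv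
  have hvmem : v ∈ Icc u v := right_mem_Icc.mpr huv
  have hWc : ContinuousOn (W lam ψ) (Ioo a b) := contOn_W hψ.continuousOn
  have hWint : ∀ t ∈ Icc u v, IntervalIntegrable (W lam ψ) volume u t := by
    intro t ht
    apply ContinuousOn.intervalIntegrable
    exact hWc.mono ((uIcc_subset_Icc humem ht).trans hIoo)
  set G : ℝ → ℂ := fun t => ∫ x in u..t, W lam ψ x with hG_def
  have hG : ∀ x ∈ uIcc u v, HasDerivAt G (W lam ψ x) x := by
    intro x hx
    rw [huIcc] at hx
    exact intervalIntegral.integral_hasDerivAt_right (hWint x hx)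
      (hWc.stronglyMeasurableAtFilter isOpen_Ioo x (hIoo hx))
      (hWc.continuousAt (isOpen_Ioo.mem_nhds (hIoo hx)))
  set h' : ℝ → ℝ := derivWithin h (Icc a b) with hh'_def
  have hh'At : ∀ x ∈ uIcc u v, HasDerivAt h (h' x) x := by
    intro x hx
    rw [huIcc] at hx
    have hxI : x ∈ Ioo a b := hIoo hx
    have hnh : Icc a b ∈ 𝓝 x := mem_nhds_iff.mpr ⟨Ioo a b, Ioo_subset_Icc_self, isOpen_Ioo, hxI⟩
    have hdiff : DifferentiableAt ℝ h x :=
      ((hh.differentiableOn one_ne_zero) x (Ioo_subset_Icc_self hxI)).differentiableAt hnh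
    have hda := hdiff.hasDerivAt
    rw [hh'_def, derivWithin_of_mem_nhds hnh]
    exact hda
  have hh'cont : ContinuousOn h' (Icc a b) :=
    hh.continuousOn_derivWithin (uniqueDiffOn_Icc hab) le_rfl
  have hu'int : IntervalIntegrable (fun x => ((h' x : ℝ) : ℂ)) volume u v := by
    apply ContinuousOn.intervalIntegrable
    rw [huIcc]
    exact Complex.continuous_ofReal.comp_continuousOn (hh'cont.mono hIcc)
  have hv'int : IntervalIntegrable (W lam ψ) volume u v := hWint v hvmem
  have hIBP := intervalIntegral.integral_mul_deriv_eq_deriv_mul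
    (u := fun x => ((h x : ℝ) : ℂ)) (u' := fun x => ((h' x : ℝ) : ℂ))
    (v := G) (v' := W lam ψ)
    (fun x hx => (hh'At x hx).ofReal_comp) hG hu'int hv'int
  have hGu : G u = 0 := intervalIntegral.integral_same
  have hcongr : ∫ x in u..v, W lam ψ x * h x = ∫ x in u..v, ((h x : ℝ) : ℂ) * W lam ψ x := by
    apply intervalIntegral.integral_congr
    intro x _
    exact mul_comm _ _
  have hGb : ∀ t ∈ Icc u v, ‖G t‖ ≤ K := fun t ht =>
    core' k hk a b ψ hψ c hc hlow lam hlam hau ht.1 (lt_of_le_of_lt ht.2 hvb)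
  have hGcont : ContinuousOn G (Icc u v) := fun x hx =>
    ((hG x (by rwa [huIcc])).continuousAt).continuousWithinAt
  have hprodint : IntervalIntegrable (fun x => ((h' x : ℝ) : ℂ) * G x) volume u v := by
    apply ContinuousOn.intervalIntegrable
    rw [huIcc]
    exact (Complex.continuous_ofReal.comp_continuousOn (hh'cont.mono hIcc)).mul hGcont
  have hnormint : ‖∫ x in u..v, ((h' x : ℝ) : ℂ) * G x‖
      ≤ K * ∫ x in u..v, |h' x| := by
    calc ‖∫ x in u..v, ((h' x : ℝ) : ℂ) * G x‖
        ≤ ∫ x in u..v, ‖((h' x : ℝ) : ℂ) * G x‖ :=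
          intervalIntegral.norm_integral_le_integral_norm huv
      _ ≤ ∫ x in u..v, |h' x| * K := by
          apply intervalIntegral.integral_mono_on huv hprodint.norm
          · apply ContinuousOn.intervalIntegrable
            rw [huIcc]
            exact ((hh'cont.mono hIcc).abs).mul continuousOn_const
          · intro x hx
            rw [norm_mul, Complex.norm_real, Real.norm_eq_abs]
            exact mul_le_mul_of_nonneg_left (hGb x hx) (abs_nonneg _)
      _ = K * ∫ x in u..v, |h' x| := by
          rw [intervalIntegral.integral_mul_const]; ring
  rw [hcongr, hIBP, hGu]
  calc ‖((h v : ℝ) : ℂ) * G v - ((h u : ℝ) : ℂ) * 0 - ∫ x in u..v, ((h' x : ℝ) : ℂ) * G x‖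
      ≤ ‖((h v : ℝ) : ℂ) * G v - ((h u : ℝ) : ℂ) * 0‖
        + ‖∫ x in u..v, ((h' x : ℝ) : ℂ) * G x‖ := norm_sub_le _ _
    _ ≤ |h v| * K + K * ∫ x in u..v, |h' x| := by
        have h1 : ‖((h v : ℝ) : ℂ) * G v - ((h u : ℝ) : ℂ) * 0‖ ≤ |h v| * K := by
          rw [mul_zero, sub_zero, norm_mul, Complex.norm_real, Real.norm_eq_abs]
          exact mul_le_mul_of_nonneg_left (hGb v hvmem) (abs_nonneg _)
        linarith
    _ = K * (|h v| + ∫ x in u..v, |h' x|) := by ring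

lemma main_pos (a b : ℝ) (hab : a < b) (k : ℕ) (hk : 2 ≤ k)
    (ψ : ℝ → ℝ) (hψ : ContDiffOn ℝ k ψ (Ioo a b))
    (c : ℝ) (hc : 0 < c)
    (hlow : ∀ x ∈ Ioo a b, c ≤ |iteratedDerivWithin k ψ (Ioo a b) x|)
    (h : ℝ → ℝ) (hh : ContDiffOn ℝ 1 h (Icc a b))
    (lam : ℝ) (hlam : 0 < lam) :
    ‖∫ x in a..b, W lam ψ x * h x‖
      ≤ (5 * 2 ^ (k - 1) - 2 : ℝ) * |c * lam| ^ (-(1:ℝ) / (k:ℝ)) *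
        (|h b| + ∫ x in a..b, |derivWithin h (Icc a b) x|) := by
  have habs : |c * lam| = lam * c := by
    rw [abs_of_pos (by positivity)]; ring
  rw [habs]
  set K : ℝ := (5 * 2 ^ (k - 1) - 2 : ℝ) * (lam * c) ^ (-(1:ℝ)/(k:ℝ)) with hK_def
  have hC3 : (3:ℝ) ≤ 5 * 2 ^ (k-1) - 2 := by
    have h1 : (1:ℝ) ≤ 2 ^ (k-1) := one_le_pow₀ one_le_two
    nlinarith
  have hKnn : 0 ≤ K := by
    apply mul_nonneg (by linarith)
    exact (Real.rpow_pos_of_pos (mul_pos hlam hc) _).le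
  obtain ⟨M, hM⟩ := isCompact_Icc.exists_bound_of_continuousOn hh.continuousOn
  have hM0 : 0 ≤ M := le_trans (norm_nonneg _) (hM a (left_mem_Icc.mpr hab.le))
  have hWh_cont : ContinuousOn (fun x => W lam ψ x * h x) (Ioo a b) :=
    (contOn_W hψ.continuousOn).mul
      (Complex.continuous_ofReal.comp_continuousOn (hh.continuousOn.mono Ioo_subset_Icc_self))
  have hnormWh : ∀ x ∈ Icc a b, ‖W lam ψ x * h x‖ ≤ M := by
    intro x hx
    rw [norm_mul, norm_W, one_mul, Complex.norm_real]
    exact hM x hx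
  have hInt : IntervalIntegrable (fun x => W lam ψ x * h x) volume a b :=
    II_of_bdd hab.le hWh_cont (fun x hx => hnormWh x (Ioo_subset_Icc_self hx))
  have hh'int : IntervalIntegrable (fun x => |derivWithin h (Icc a b) x|) volume a b := by
    apply ContinuousOn.intervalIntegrable
    rw [uIcc_of_le hab.le]
    exact (hh.continuousOn_derivWithin (uniqueDiffOn_Icc hab) le_rfl).abs
  set l := 𝓝[>] (0:ℝ) with hl_def
  set F := fun η : ℝ => ‖∫ x in (a+η)..(b-η), W lam ψ x * h x‖ with hF_def
  set Gf := fun η : ℝ =>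
    K * (|h (b-η)| + ∫ x in a..b, |derivWithin h (Icc a b) x|) with hGf_def
  have hev : Ioo (0:ℝ) ((b-a)/2) ∈ l := Ioo_mem_nhdsGT_of_mem ⟨le_refl 0, by linarith⟩
  have hFG : ∀ᶠ η in l, F η ≤ Gf η := by
    filter_upwards [hev] with η hη
    have h1 : a < a + η := by linarith [hη.1]
    have h2 : a + η ≤ b - η := by
      have := hη.2
      have h2a : η < (b-a)/2 := this
      linarith
    have h3 : b - η < b := by linarith [hη.1]
    have hbound := amp_sub k hk a b hab ψ hψ c hc hlow h hh lam hlam h1 h2 h3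
    refine le_trans hbound ?_
    apply mul_le_mul_of_nonneg_left ?_ hKnn
    apply add_le_add le_rfl
    apply intervalIntegral.integral_mono_interval (by linarith [hη.1] : a ≤ a + η) h2
      (by linarith [hη.1] : b - η ≤ b)
    · exact Filter.Eventually.of_forall (fun x => abs_nonneg _)
    · exact hh'int
  have hFt : Tendsto F l (𝓝 ‖∫ x in a..b, W lam ψ x * h x‖) := by
    rw [tendsto_iff_dist_tendsto_zero]
    have hb2 : Tendsto (fun η : ℝ => 2*M*η) l (𝓝 0) := by
      have htend : Tendsto (fun η : ℝ => 2*M*η) (𝓝 0) (𝓝 (2*M*0)) :=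
        (continuous_const.mul continuous_id).tendsto 0
      rw [mul_zero] at htend
      exact htend.mono_left nhdsWithin_le_nhds
    apply squeeze_zero' (Filter.Eventually.of_forall (fun η => dist_nonneg)) ?_ hb2
    filter_upwards [hev] with η hη
    have h1 : a ≤ a + η := by linarith [hη.1]
    have h2 : a + η ≤ b - η := by
      have h2a : η < (b-a)/2 := hη.2
      linarith
    have h3 : b - η ≤ b := by linarith [hη.1]
    have i1 : IntervalIntegrable (fun x => W lam ψ x * h x) volume a (a+η) := by
      apply hInt.mono_set
      rw [uIcc_of_le h1, uIcc_of_le hab.le]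
      exact Icc_subset_Icc le_rfl (by linarith)
    have i2 : IntervalIntegrable (fun x => W lam ψ x * h x) volume (a+η) (b-η) := by
      apply hInt.mono_set
      rw [uIcc_of_le h2, uIcc_of_le hab.le]
      exact Icc_subset_Icc (by linarith) (by linarith)
    have i3 : IntervalIntegrable (fun x => W lam ψ x * h x) volume (b-η) b := by
      apply hInt.mono_set
      rw [uIcc_of_le h3, uIcc_of_le hab.le]
      exact Icc_subset_Icc (by linarith) le_rfl
    have esplit : (∫ x in a..(a+η), W lam ψ x * h x) + (∫ x in (a+η)..(b-η), W lam ψ x * h x)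
        + (∫ x in (b-η)..b, W lam ψ x * h x) = ∫ x in a..b, W lam ψ x * h x := by
      rw [intervalIntegral.integral_add_adjacent_intervals i1 i2,
        intervalIntegral.integral_add_adjacent_intervals (i1.trans i2) i3]
    have hn1 : ‖∫ x in a..(a+η), W lam ψ x * h x‖ ≤ M * η := by
      have := intervalIntegral.norm_integral_le_of_norm_le_const
        (C := M) (f := fun x => W lam ψ x * h x) (a := a) (b := a+η)
        (fun x hx => by
          apply hnormWh
          rw [uIoc_of_le h1] at hx
          exact ⟨le_of_lt hx.1, by linarith [hx.2]⟩)
      rwa [show |a + η - a| = η by rw [abs_of_nonneg (by linarith [hη.1])]; ring] at this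
    have hn3 : ‖∫ x in (b-η)..b, W lam ψ x * h x‖ ≤ M * η := by
      have := intervalIntegral.norm_integral_le_of_norm_le_const
        (C := M) (f := fun x => W lam ψ x * h x) (a := b-η) (b := b)
        (fun x hx => by
          apply hnormWh
          rw [uIoc_of_le h3] at hx
          exact ⟨by linarith [hx.1, hη.1, hη.2], hx.2⟩)
      rwa [show |b - (b - η)| = η by rw [abs_of_nonneg (by linarith [hη.1] : (0:ℝ) ≤ b - (b - η))]; ring] at this
    calc dist (F η) ‖∫ x in a..b, W lam ψ x * h x‖
        = |F η - ‖∫ x in a..b, W lam ψ x * h x‖| := Real.dist_eq _ _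
      _ ≤ ‖(∫ x in (a+η)..(b-η), W lam ψ x * h x) - ∫ x in a..b, W lam ψ x * h x‖ :=
          abs_norm_sub_norm_le _ _
      _ = ‖-((∫ x in a..(a+η), W lam ψ x * h x) + (∫ x in (b-η)..b, W lam ψ x * h x))‖ := by
          rw [← esplit]
          congr 1
          ring
      _ = ‖(∫ x in a..(a+η), W lam ψ x * h x) + (∫ x in (b-η)..b, W lam ψ x * h x)‖ :=
          norm_neg _
      _ ≤ M * η + M * η := le_trans (norm_add_le _ _) (add_le_add hn1 hn3)
      _ = 2 * M * η := by ring
  have hGt : Tendsto Gf l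
      (𝓝 (K * (|h b| + ∫ x in a..b, |derivWithin h (Icc a b) x|))) := by
    apply Filter.Tendsto.const_mul
    apply Filter.Tendsto.add_const
    have hsubt : Tendsto (fun η : ℝ => b - η) l (𝓝[Icc a b] b) := by
      rw [tendsto_nhdsWithin_iff]
      constructor
      · have htend : Tendsto (fun η : ℝ => b - η) (𝓝 0) (𝓝 (b - 0)) :=
          (continuous_const.sub continuous_id).tendsto 0
        rw [sub_zero] at htend
        exact htend.mono_left nhdsWithin_le_nhds
      · filter_upwards [hev] with η hη
        have h2a : η < (b-a)/2 := hη.2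
        exact ⟨by linarith, by linarith [hη.1]⟩
    have hcb : ContinuousWithinAt h (Icc a b) b := hh.continuousOn b (right_mem_Icc.mpr hab.le)
    exact (hcb.tendsto.comp hsubt).abs
  exact le_of_tendsto_of_tendsto hFt hGt hFG

end VDCaux

open intervalIntegral

/-- Van der Corput lemma with amplitude: if `ψ` is real-valued, `Cᵏ` on `(a,b)` with `k ≥ 2`,
`|ψ⁽ᵏ⁾| ≥ c > 0` there, and `h` is `C¹` (up to the endpoints), then for every `λ ≠ 0`,
`|∫_a^b e^{iλψ(x)} h(x) dx| ≤ (5·2^{k-1} − 2) |cλ|^{-1/k} (|h(b)| + ∫_a^b |h'|)`. -/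
theorem van_der_corput_amplitude (a b : ℝ) (hab : a < b) (k : ℕ) (hk : 2 ≤ k)
    (ψ : ℝ → ℝ) (hψ : ContDiffOn ℝ k ψ (Set.Ioo a b))
    (c : ℝ) (hc : 0 < c)
    (hlow : ∀ x ∈ Set.Ioo a b, c ≤ |iteratedDerivWithin k ψ (Set.Ioo a b) x|)
    (h : ℝ → ℝ) (hh : ContDiffOn ℝ 1 h (Set.Icc a b))
    (lam : ℝ) (hlam : lam ≠ 0) :
    ‖∫ x in a..b, Complex.exp (Complex.I * lam * ψ x) * (h x : ℂ)‖
      ≤ (5 * 2 ^ (k - 1) - 2 : ℝ) * |c * lam| ^ (-(1 : ℝ) / k) *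
        (|h b| + ∫ x in a..b, |derivWithin h (Set.Icc a b) x|) := by
  rcases lt_or_gt_of_ne hlam with hneg | hpos
  · have hψn : ContDiffOn ℝ k (-ψ) (Set.Ioo a b) := hψ.neg
    have hlown : ∀ x ∈ Set.Ioo a b, c ≤ |iteratedDerivWithin k (-ψ) (Set.Ioo a b) x| := by
      intro x hx
      rw [iteratedDerivWithin_neg, abs_neg]
      exact hlow x hx
    have hmain := VDCaux.main_pos a b hab k hk (-ψ) hψn c hc hlown h hh (-lam) (by linarith)
    have hWeq : ∀ x : ℝ, VDCaux.W (-lam) (-ψ) x = Complex.exp (Complex.I * lam * ψ x) := by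
      intro x
      simp only [VDCaux.W, Pi.neg_apply, Complex.ofReal_neg]
      congr 1
      push_cast
      ring
    simp only [hWeq] at hmain
    rw [show c * -lam = -(c * lam) by ring, abs_neg] at hmain
    exact hmain
  · exact VDCaux.main_pos a b hab k hk ψ hψ c hc hlow h hh lam hpos
end
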